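/- arXiv:1610.04686 — 8 statements merged into one kernel-verified Lean document; each statement's English description precedes it below -/
import Mathlib

section
/- For any real square matrix A with μ(A) := λ_max((A+A')/2), and all t ≥ 0, the spectral norm satisfies ‖exp(tA)‖₂ ≤ exp(t·μ(A)). -/
open Matrix
open scoped RealInnerProductSpace

section Aux

attribute [local instance] Matrix.linftyOpNormedAddCommGroup Matrix.linftyOpNormedRing
  Matrix.linftyOpNormedAlgebra


lemma rayleigh_le_aux {r : ℕ} {B : Matrix (Fin r) (Fin r) ℝ} (hB : B.IsHermitian)
    (x : EuclideanSpace ℝ (Fin r)) :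
    ⟪x, Matrix.toEuclideanLin B x⟫ ≤ (⨆ i, hB.eigenvalues i) * ‖x‖^2 := by
  classical
  rcases Nat.eq_zero_or_pos r with hr | hr
  · subst hr
    simp [ciSup_of_empty, Subsingleton.elim x 0]
  have hne : Nonempty (Fin r) := Fin.pos_iff_nonempty.mp hr
  set b := hB.eigenvectorBasis with hb
  have hsymm := (Matrix.isHermitian_iff_isSymmetric.mp hB)
  have key : ⟪x, Matrix.toEuclideanLin B x⟫
      = ∑ i, hB.eigenvalues i * (⟪x, b i⟫ * ⟪b i, x⟫) := by
    rw [← b.sum_inner_mul_inner x (Matrix.toEuclideanLin B x)]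
    congr 1; ext i
    have h1 : ⟪b i, Matrix.toEuclideanLin B x⟫ = ⟪Matrix.toEuclideanLin B (b i), x⟫ := by
      rw [hsymm (b i) x]
    have h2 : Matrix.toEuclideanLin B (b i) = hB.eigenvalues i • b i := by
      apply (WithLp.equiv 2 _).injective
      ext j
      have := congrFun (hB.mulVec_eigenvectorBasis i) j
      simpa [Matrix.toEuclideanLin_apply] using this
    rw [h1, h2, inner_smul_left]
    simp [starRingEnd_apply]
    ring
  rw [key]
  have hsum : ∑ i, (⟪x, b i⟫ * ⟪b i, x⟫) = ‖x‖^2 := by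
    rw [b.sum_inner_mul_inner x x, real_inner_self_eq_norm_sq]
  calc ∑ i, hB.eigenvalues i * (⟪x, b i⟫ * ⟪b i, x⟫)
      ≤ ∑ i, (⨆ j, hB.eigenvalues j) * (⟪x, b i⟫ * ⟪b i, x⟫) := by
        apply Finset.sum_le_sum
        intro i _
        have hnn : 0 ≤ ⟪x, b i⟫ * ⟪b i, x⟫ := by
          rw [real_inner_comm (b i) x]; exact mul_self_nonneg _
        exact mul_le_mul_of_nonneg_right (le_ciSup (Finite.bddAbove_range _) i) hnn
    _ = (⨆ j, hB.eigenvalues j) * ‖x‖^2 := by rw [← Finset.mul_sum, hsum]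


lemma pointwise_bound {r : ℕ} (A : Matrix (Fin r) (Fin r) ℝ)
    (hsym : (((1 : ℝ)/2) • (A + Aᵀ)).IsHermitian)
    (x : EuclideanSpace ℝ (Fin r)) (t : ℝ) (ht : 0 ≤ t) :
    ‖Matrix.toEuclideanCLM (𝕜 := ℝ) (NormedSpace.exp (t • A)) x‖
      ≤ Real.exp (t * (⨆ i, hsym.eigenvalues i)) * ‖x‖ := by
  classical
  set N : ℝ := ⨆ i, hsym.eigenvalues i with hN
  set f : ℝ → EuclideanSpace ℝ (Fin r) :=
    fun u => Matrix.toEuclideanCLM (𝕜 := ℝ) (NormedSpace.exp (u • A)) x with hfdef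
  let φ : Matrix (Fin r) (Fin r) ℝ →ₗ[ℝ] EuclideanSpace ℝ (Fin r) :=
    { toFun := fun M => Matrix.toEuclideanCLM (𝕜 := ℝ) M x
      map_add' := by intro M M'; simp
      map_smul' := by intro c M; simp }
  have hf : ∀ u : ℝ, HasDerivAt f (Matrix.toEuclideanCLM (𝕜 := ℝ) A (f u)) u := by
    intro u
    have h1 : HasDerivAt (fun v : ℝ => NormedSpace.exp (v • A))
        (A * NormedSpace.exp (u • A)) u := hasDerivAt_exp_smul_const' A u
    have h2 := (LinearMap.toContinuousLinearMap φ).hasFDerivAt.comp_hasDerivAt u h1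
    have h3 : (LinearMap.toContinuousLinearMap φ) (A * NormedSpace.exp (u • A))
        = Matrix.toEuclideanCLM (𝕜 := ℝ) A (f u) := by
      show Matrix.toEuclideanCLM (𝕜 := ℝ) (A * NormedSpace.exp (u • A)) x = _
      rw [_root_.map_mul]
      rfl
    rw [← h3]
    exact h2
  set g : ℝ → ℝ := fun u => Real.exp (-2 * N * u) * ‖f u‖^2 with hgdef
  have hg : ∀ u : ℝ, HasDerivAt g
      ((-2 * N) * Real.exp (-2 * N * u) * ‖f u‖^2
        + Real.exp (-2 * N * u) * (2 * ⟪f u, Matrix.toEuclideanCLM (𝕜 := ℝ) A (f u)⟫)) u := by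
    intro u
    have h1 : HasDerivAt (fun v : ℝ => Real.exp (-2 * N * v)) (Real.exp (-2 * N * u) * (-2 * N)) u := by
      simpa using ((hasDerivAt_id u).const_mul (-2 * N)).exp
    have h2 := (hf u).norm_sq
    have := h1.mul h2
    exact this.congr_deriv (by ring)
  have hkey : ∀ y : EuclideanSpace ℝ (Fin r),
      ⟪y, Matrix.toEuclideanCLM (𝕜 := ℝ) A y⟫ ≤ N * ‖y‖^2 := by
    intro y
    have hcoe : Matrix.toEuclideanCLM (𝕜 := ℝ) A y = Matrix.toEuclideanLin A y := by
      rw [← Matrix.coe_toEuclideanCLM_eq_toEuclideanLin]; rfl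
    have hadj : ⟪y, Matrix.toEuclideanLin Aᵀ y⟫ = ⟪Matrix.toEuclideanLin A y, y⟫ := by
      have hT : (Aᵀ : Matrix (Fin r) (Fin r) ℝ) = Aᴴ := by
        ext i j; simp [Matrix.conjTranspose_apply]
      rw [hT, Matrix.toEuclideanLin_conjTranspose_eq_adjoint, LinearMap.adjoint_inner_right]
    have hhalf : ⟪y, Matrix.toEuclideanLin (((1 : ℝ)/2) • (A + Aᵀ)) y⟫
        = ⟪y, Matrix.toEuclideanLin A y⟫ := by
      rw [_root_.map_smul, map_add]
      simp only [LinearMap.add_apply, LinearMap.smul_apply, inner_smul_right, inner_add_right]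
      rw [hadj, real_inner_comm (Matrix.toEuclideanLin A y) y]
      ring
    rw [hcoe, ← hhalf]
    exact rayleigh_le_aux hsym y
  have hg' : ∀ u : ℝ, deriv g u ≤ 0 := by
    intro u
    rw [(hg u).deriv]
    have h1 := hkey (f u)
    have h2 : (0:ℝ) < Real.exp (-2 * N * u) := Real.exp_pos _
    nlinarith [h2]
  have hdiff : Differentiable ℝ g := fun u => (hg u).differentiableAt
  have hanti : Antitone g := antitone_of_deriv_nonpos hdiff hg'
  have h0 : g t ≤ g 0 := hanti ht
  have hg0 : g 0 = ‖x‖^2 := by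
    simp [hgdef, hfdef, NormedSpace.exp_zero]
  have hgt : Real.exp (-2 * N * t) * ‖f t‖^2 ≤ ‖x‖^2 := by
    rw [← hg0]; exact h0
  have hft2 : ‖f t‖^2 ≤ (Real.exp (t * N) * ‖x‖)^2 := by
    have key : ‖f t‖^2 ≤ Real.exp (2 * N * t) * ‖x‖^2 := by
      have he : Real.exp (-2 * N * t) = (Real.exp (2 * N * t))⁻¹ := by
        rw [← Real.exp_neg]; ring_nf
      rw [he] at hgt
      have hp : (0:ℝ) < Real.exp (2 * N * t) := Real.exp_pos _
      calc ‖f t‖^2 = Real.exp (2*N*t) * ((Real.exp (2*N*t))⁻¹ * ‖f t‖^2) := by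
            field_simp
        _ ≤ Real.exp (2*N*t) * ‖x‖^2 := by
            apply mul_le_mul_of_nonneg_left hgt hp.le
    calc ‖f t‖^2 ≤ Real.exp (2 * N * t) * ‖x‖^2 := key
      _ = (Real.exp (t * N) * ‖x‖)^2 := by
          rw [mul_pow, sq (Real.exp (t * N)), ← Real.exp_add]
          ring_nf
  have h1 := Real.sqrt_le_sqrt hft2
  rwa [Real.sqrt_sq (norm_nonneg _),
    Real.sqrt_sq (mul_nonneg (Real.exp_pos _).le (norm_nonneg _))] at h1

end Aux


/-- The largest eigenvalue of a real symmetric (Hermitian) matrix. -/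
noncomputable def lamMax {r : ℕ} {A : Matrix (Fin r) (Fin r) ℝ} (hA : A.IsHermitian) : ℝ :=
  ⨆ i, hA.eigenvalues i

/-- The spectral (ℓ²-operator) norm of a real matrix. -/
noncomputable def specNorm {r : ℕ} (A : Matrix (Fin r) (Fin r) ℝ) : ℝ :=
  ‖LinearMap.toContinuousLinearMap (Matrix.toEuclideanLin A)‖

/-- `‖exp(tA)‖₂ ≤ exp(t μ(A))` where `μ(A) = λ_max((A+Aᵀ)/2)` is the logarithmic norm. -/
theorem exp_specNorm_le_exp_logNorm (r : ℕ) (A : Matrix (Fin r) (Fin r) ℝ)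
    (hsym : (((1 : ℝ)/2) • (A + Aᵀ)).IsHermitian) :
    ∀ t : ℝ, 0 ≤ t →
      specNorm (NormedSpace.exp (t • A)) ≤ Real.exp (t * lamMax hsym) := by
  intro t ht
  unfold specNorm lamMax
  apply ContinuousLinearMap.opNorm_le_bound _ (Real.exp_nonneg _)
  intro x
  have h := pointwise_bound A hsym x t ht
  have hcoe : Matrix.toEuclideanCLM (𝕜 := ℝ) (NormedSpace.exp (t • A)) x
      = LinearMap.toContinuousLinearMap (Matrix.toEuclideanLin (NormedSpace.exp (t • A))) x := by
    rw [show (Matrix.toEuclideanCLM (𝕜 := ℝ) (NormedSpace.exp (t • A)) x)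
        = Matrix.toEuclideanLin (NormedSpace.exp (t • A)) x from by
      rw [← Matrix.coe_toEuclideanCLM_eq_toEuclideanLin]; rfl]
    rfl
  rw [← hcoe]
  exact h
end

section
/- Let φ_t(Q) denote the solution at time t of the differential Riccati equation ∂_t P_t = A_t P_t + P_t A_t' − P_t S_t P_t + R1 with P_0 = Q, where S_t is positive semi-definite for all t and R1 is positive definite. Then for all 0 ≤ s ≤ t, φ_t(Q1) − φ_t(Q2) = E_{s,t}(Q1,Q2) [φ_s(Q1) − φ_s(Q2)] E_{s,t}(Q1,Q2)', where E_{s,t}(Q1,Q2) is the transition matrix generated by the time-varying matrix flow u ↦ A_u − ((φ_u(Q1)+φ_u(Q2))/2) S_u. -/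
open Matrix

attribute [local instance] Matrix.normedAddCommGroup Matrix.normedSpace

@[reducible] noncomputable def matNAG (r : ℕ) : NormedAddCommGroup (Matrix (Fin r) (Fin r) ℝ) :=
  { Matrix.normedAddCommGroup with
    toAddCommGroup := Matrix.addCommGroup
    toUniformSpace :=
      { Matrix.normedAddCommGroup.toUniformSpace with
        toTopologicalSpace := instTopologicalSpaceMatrix } }

attribute [local instance] matNAG

@[reducible] noncomputable def matNS (r : ℕ) : NormedSpace ℝ (Matrix (Fin r) (Fin r) ℝ) :=
  { toModule := Matrix.module
    norm_smul_le := Matrix.normedSpace.norm_smul_le }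

attribute [local instance] matNS

noncomputable def matMulCLM (r : ℕ) :
    Matrix (Fin r) (Fin r) ℝ →L[ℝ] Matrix (Fin r) (Fin r) ℝ →L[ℝ] Matrix (Fin r) (Fin r) ℝ :=
  LinearMap.toContinuousLinearMap
    ((LinearMap.toContinuousLinearMap.toLinearMap).comp
      (LinearMap.mul ℝ (Matrix (Fin r) (Fin r) ℝ)))

@[simp] lemma matMulCLM_apply {r : ℕ} (a b : Matrix (Fin r) (Fin r) ℝ) :
    matMulCLM r a b = a * b := rfl

noncomputable def matTransposeCLM (r : ℕ) :
    Matrix (Fin r) (Fin r) ℝ →L[ℝ] Matrix (Fin r) (Fin r) ℝ :=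
  LinearMap.toContinuousLinearMap
    { toFun := fun a => aᵀ
      map_add' := fun a b => Matrix.transpose_add a b
      map_smul' := fun c a => Matrix.transpose_smul c a }

@[simp] lemma matTransposeCLM_apply {r : ℕ} (a : Matrix (Fin r) (Fin r) ℝ) :
    matTransposeCLM r a = aᵀ := rfl

lemma HasDerivAt.matMul {r : ℕ} {f g : ℝ → Matrix (Fin r) (Fin r) ℝ}
    {f' g' : Matrix (Fin r) (Fin r) ℝ} {x : ℝ}
    (hf : HasDerivAt f f' x) (hg : HasDerivAt g g' x) :
    HasDerivAt (fun t => f t * g t) (f' * g x + f x * g') x := by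
  have h1 : HasDerivAt (fun t => matMulCLM r (f t)) (matMulCLM r f') x :=
    (matMulCLM r).hasFDerivAt.comp_hasDerivAt x hf
  simpa using h1.clm_apply hg

lemma HasDerivAt.matTranspose {r : ℕ} {f : ℝ → Matrix (Fin r) (Fin r) ℝ}
    {f' : Matrix (Fin r) (Fin r) ℝ} {x : ℝ}
    (hf : HasDerivAt f f' x) :
    HasDerivAt (fun t => (f t)ᵀ) f'ᵀ x := by
  exact (matTransposeCLM r).hasFDerivAt.comp_hasDerivAt x hf

/-- The key algebraic identity for the difference of two Riccati flows. -/
lemma riccati_diff_algebra {r : ℕ} (A P Q S R1 : Matrix (Fin r) (Fin r) ℝ) :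
    (A * P + P * Aᵀ - P * S * P + R1) - (A * Q + Q * Aᵀ - Q * S * Q + R1)
      = (A - ((1 : ℝ)/2) • ((P + Q) * S)) * (P - Q)
        + (P - Q) * (Aᵀ - ((1 : ℝ)/2) • (S * (P + Q))) := by
  simp only [Matrix.mul_sub, Matrix.sub_mul, Matrix.add_mul, Matrix.mul_add,
    Matrix.smul_mul, Matrix.mul_smul, smul_sub, smul_add, Matrix.mul_assoc]
  module

/-- Semigroup formula for differences of Riccati flows:
`φ_t(Q1) − φ_t(Q2) = E_{s,t}(Q1,Q2) [φ_s(Q1) − φ_s(Q2)] E_{s,t}(Q1,Q2)ᵀ`, where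
`E_{s,t}(Q1,Q2)` is the transition matrix of `u ↦ A_u − ((φ_u(Q1)+φ_u(Q2))/2) S_u`. -/
theorem riccati_flow_semigroup_formula (r : ℕ)
    (A S : ℝ → Matrix (Fin r) (Fin r) ℝ)
    (hAcont : Continuous A) (hScont : Continuous S)
    (hS : ∀ t : ℝ, (S t).PosSemidef)
    (R1 : Matrix (Fin r) (Fin r) ℝ) (hR1 : R1.PosDef)
    (Q1 Q2 : Matrix (Fin r) (Fin r) ℝ) (hQ1 : Q1.PosDef) (hQ2 : Q2.PosDef)
    (φ1 φ2 : ℝ → Matrix (Fin r) (Fin r) ℝ)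
    (hφ1sym : ∀ t : ℝ, (φ1 t).IsSymm) (hφ2sym : ∀ t : ℝ, (φ2 t).IsSymm)
    (hφ10 : φ1 0 = Q1) (hφ20 : φ2 0 = Q2)
    (hφ1 : ∀ t : ℝ, HasDerivAt φ1
      (A t * φ1 t + φ1 t * (A t)ᵀ - φ1 t * S t * φ1 t + R1) t)
    (hφ2 : ∀ t : ℝ, HasDerivAt φ2
      (A t * φ2 t + φ2 t * (A t)ᵀ - φ2 t * S t * φ2 t + R1) t)
    (E : ℝ → ℝ → Matrix (Fin r) (Fin r) ℝ)
    (hE0 : ∀ s : ℝ, E s s = 1)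
    (hE : ∀ s t : ℝ, HasDerivAt (fun u => E s u)
      ((A t - ((1 : ℝ)/2) • ((φ1 t + φ2 t) * S t)) * E s t) t) :
    ∀ s t : ℝ, 0 ≤ s → s ≤ t →
      φ1 t - φ2 t = E s t * (φ1 s - φ2 s) * (E s t)ᵀ := by
  intro s t hs hst
  set F : ℝ → Matrix (Fin r) (Fin r) ℝ :=
    fun u => A u - ((1 : ℝ)/2) • ((φ1 u + φ2 u) * S u) with hF
  have hSsymm : ∀ u : ℝ, (S u)ᵀ = S u := fun u => by
    have := (hS u).1
    rwa [Matrix.IsHermitian, Matrix.conjTranspose_eq_transpose_of_trivial] at this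
  have hFT : ∀ u : ℝ, (F u)ᵀ = (A u)ᵀ - ((1 : ℝ)/2) • (S u * (φ1 u + φ2 u)) := by
    intro u
    rw [hF]
    simp [Matrix.transpose_smul, Matrix.transpose_mul, hSsymm u,
      Matrix.transpose_add, (hφ1sym u).eq, (hφ2sym u).eq]
  set C : Matrix (Fin r) (Fin r) ℝ := φ1 s - φ2 s with hC
  set H : ℝ → Matrix (Fin r) (Fin r) ℝ :=
    fun u => φ1 u - φ2 u - E s u * C * (E s u)ᵀ with hH
  -- derivative of H
  have hHderiv : ∀ u : ℝ, HasDerivAt H (F u * H u + H u * (F u)ᵀ) u := by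
    intro u
    have hEu := hE s u
    have hG : HasDerivAt (fun v => E s v * C * (E s v)ᵀ)
        (F u * (E s u * C * (E s u)ᵀ) + (E s u * C * (E s u)ᵀ) * (F u)ᵀ) u := by
      have h2 := (hEu.matMul (hasDerivAt_const u C)).matMul hEu.matTranspose
      convert h2 using 1
      rw [hF]
      simp [Matrix.transpose_mul, Matrix.mul_assoc]
    have hD : HasDerivAt H
        (((A u * φ1 u + φ1 u * (A u)ᵀ - φ1 u * S u * φ1 u + R1)
          - (A u * φ2 u + φ2 u * (A u)ᵀ - φ2 u * S u * φ2 u + R1))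
          - (F u * (E s u * C * (E s u)ᵀ) + (E s u * C * (E s u)ᵀ) * (F u)ᵀ)) u :=
      ((hφ1 u).sub (hφ2 u)).sub hG
    convert hD using 1
    rw [riccati_diff_algebra (A u) (φ1 u) (φ2 u) (S u) R1]
    rw [hH, hFT u, hF]
    simp only [Matrix.mul_sub, Matrix.sub_mul]
    abel
  -- the generator as a family of continuous linear maps
  set L : ℝ → Matrix (Fin r) (Fin r) ℝ →L[ℝ] Matrix (Fin r) (Fin r) ℝ :=
    fun u => matMulCLM r (F u) + (matMulCLM r).flip ((F u)ᵀ) with hL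
  have hLapp : ∀ u X, L u X = F u * X + X * (F u)ᵀ := by
    intro u X; simp [hL]
  -- continuity facts
  have hφ1cont : Continuous φ1 := continuous_iff_continuousAt.2 fun x => (hφ1 x).continuousAt
  have hφ2cont : Continuous φ2 := continuous_iff_continuousAt.2 fun x => (hφ2 x).continuousAt
  have hEcont : Continuous (fun u => E s u) :=
    continuous_iff_continuousAt.2 fun x => (hE s x).continuousAt
  have hHcont : Continuous H := by
    rw [hH]
    exact (hφ1cont.sub hφ2cont).sub
      (((hEcont.matrix_mul continuous_const).matrix_mul hEcont.matrix_transpose))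
  have hFcont : Continuous F := by
    rw [hF]
    exact hAcont.sub (((hφ1cont.add hφ2cont).matrix_mul hScont).const_smul ((1 : ℝ)/2))
  have hLcont : Continuous L := by
    rw [hL]
    exact ((matMulCLM r).continuous.comp hFcont).add
      ((matMulCLM r).flip.continuous.comp hFcont.matrix_transpose)
  -- bound the operator norms on [s, t]
  obtain ⟨K, hK⟩ := (isCompact_Icc (a := s) (b := t)).exists_bound_of_continuousOn
    hLcont.continuousOn
  -- Grönwall
  have hHs : H s = 0 := by
    simp [hH, hE0 s, hC]
  have hgron := norm_le_gronwallBound_of_norm_deriv_right_le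
    (f := H) (f' := fun u => L u (H u)) (δ := 0) (K := K) (ε := 0) (a := s) (b := t)
    hHcont.continuousOn
    (fun x _ => by
      have hd := (hHderiv x).hasDerivWithinAt (s := Set.Ici x)
      rwa [← hLapp x (H x)] at hd)
    (by simp [hHs])
    (fun x hx => by
      show ‖L x (H x)‖ ≤ K * ‖H x‖ + 0
      calc ‖L x (H x)‖ ≤ ‖L x‖ * ‖H x‖ := (L x).le_opNorm (H x)
        _ ≤ K * ‖H x‖ + 0 := by
            rw [add_zero]
            exact mul_le_mul_of_nonneg_right (hK x (Set.Ico_subset_Icc_self hx))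
              (norm_nonneg _))
  have hHt : ‖H t‖ ≤ 0 := by
    have := hgron t ⟨hst, le_refl t⟩
    rwa [gronwallBound_ε0_δ0] at this
  have : H t = 0 := norm_le_zero_iff.mp hHt
  rw [hH] at this
  have := sub_eq_zero.mp this
  rw [this, hC]
end

section
/- With φ_t and E_{s,t}(Q) the transition matrix generated by u ↦ A_u − φ_u(Q) S_u, for all 0 ≤ s ≤ t: φ_t(Q1) − φ_t(Q2) = E_{s,t}(Q2)[φ_s(Q1)−φ_s(Q2)]E_{s,t}(Q2)' − ∫_s^t E_{u,t}(Q2)[φ_u(Q1)−φ_u(Q2)] S_u [φ_u(Q1)−φ_u(Q2)] E_{u,t}(Q2)' du. -/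
open Matrix

attribute [local instance] Matrix.normedAddCommGroup Matrix.normedSpace


namespace RiccatiSemigroupAux

open Set

variable {r : ℕ}

local notation "M" => Matrix (Fin r) (Fin r) ℝ

theorem norm_mul_le' (X Y : M) : ‖X * Y‖ ≤ r * ‖X‖ * ‖Y‖ := by
  rw [Matrix.norm_le_iff (by positivity)]
  intro i j
  rw [Matrix.mul_apply]
  calc ‖∑ k, X i k * Y k j‖ ≤ ∑ k : Fin r, ‖X i k * Y k j‖ := norm_sum_le _ _
    _ ≤ ∑ k : Fin r, ‖X‖ * ‖Y‖ := by
        apply Finset.sum_le_sum; intro k _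
        rw [norm_mul]
        exact mul_le_mul (Matrix.norm_entry_le_entrywise_sup_norm X)
          (Matrix.norm_entry_le_entrywise_sup_norm Y) (norm_nonneg _) (norm_nonneg _)
    _ = r * ‖X‖ * ‖Y‖ := by simp [Finset.sum_const, mul_assoc]

theorem hasDerivAt_mul {f g : ℝ → M} {f' g' : M} {t : ℝ} (hf : HasDerivAt f f' t)
    (hg : HasDerivAt g g' t) :
    HasDerivAt (fun u => f u * g u) (f' * g t + f t * g') t := by
  refine hasDerivAt_pi.2 ?_
  intro i
  refine hasDerivAt_pi.2 ?_
  intro j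
  have hfe : ∀ a b, HasDerivAt (fun u => f u a b) (f' a b) t := fun a b =>
    (hasDerivAt_pi.1 ((hasDerivAt_pi.1 hf) a)) b
  have hge : ∀ a b, HasDerivAt (fun u => g u a b) (g' a b) t := fun a b =>
    (hasDerivAt_pi.1 ((hasDerivAt_pi.1 hg) a)) b
  simp only [Matrix.add_apply, Matrix.mul_apply]
  have := HasDerivAt.fun_sum (u := Finset.univ)
    (fun k (_ : k ∈ Finset.univ) => ((hfe i k).mul (hge k j)))
  simpa [Finset.sum_add_distrib] using this

theorem hasDerivAt_transpose {f : ℝ → M} {f' : M} {t : ℝ} (hf : HasDerivAt f f' t) :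
    HasDerivAt (fun u => (f u)ᵀ) f'ᵀ t := by
  refine hasDerivAt_pi.2 ?_
  intro i
  refine hasDerivAt_pi.2 ?_
  intro j
  exact (hasDerivAt_pi.1 ((hasDerivAt_pi.1 hf) j)) i

theorem ode_unique (v : ℝ → M → M)
    (hv : ∀ a b : ℝ, ∃ K : NNReal, ∀ u ∈ Icc a b, LipschitzWith K (v u))
    (f g : ℝ → M) (hf : ∀ u, HasDerivAt f (v u (f u)) u)
    (hg : ∀ u, HasDerivAt g (v u (g u)) u) (t₀ : ℝ) (heq : f t₀ = g t₀)
    (t : ℝ) : f t = g t := by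
  set a := min t₀ t - 1 with ha
  set b := max t₀ t + 1 with hb
  have hab : a ≤ b := by
    have := min_le_max (a := t₀) (b := t); simp only [ha, hb]; linarith
  obtain ⟨K, hK⟩ := hv a b
  set τ : ℝ → ℝ := fun u => max a (min u b) with hτ
  have hτmem : ∀ u, τ u ∈ Icc a b := fun u =>
    ⟨le_max_left _ _, max_le hab (min_le_right _ _)⟩
  have hτeq : ∀ u ∈ Ioo a b, τ u = u := by
    intro u hu
    simp [hτ, min_eq_left hu.2.le, max_eq_right hu.1.le]
  have ht₀ : t₀ ∈ Ioo a b := by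
    have h1 := min_le_left t₀ t
    have h2 := le_max_left t₀ t
    constructor
    · simp only [ha]; linarith
    · simp only [hb]; linarith
  have htIcc : t ∈ Icc a b := by
    have h1 := min_le_right t₀ t
    have h2 := le_max_right t₀ t
    constructor
    · simp only [ha]; linarith
    · simp only [hb]; linarith
  have key : EqOn f g (Icc a b) :=
    ODE_solution_unique_of_mem_Icc
      (v := fun u => v (τ u)) (s := fun _ => univ) (K := K)
      (fun u _ => lipschitzOnWith_univ.mpr (hK _ (hτmem u))) ht₀
      (fun u _ => (hf u).continuousAt.continuousWithinAt)
      (fun u hu => by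
        show HasDerivAt f (v (τ u) (f u)) u; rw [hτeq u hu]; exact hf u)
      (fun _ _ => trivial)
      (fun u _ => (hg u).continuousAt.continuousWithinAt)
      (fun u hu => by
        show HasDerivAt g (v (τ u) (g u)) u; rw [hτeq u hu]; exact hg u)
      (fun _ _ => trivial) heq
  exact key htIcc

theorem affine_lip (L1 L2 c : ℝ → M) (hL1 : Continuous L1) (hL2 : Continuous L2)
    (a b : ℝ) : ∃ K : NNReal, ∀ u ∈ Icc a b,
      LipschitzWith K (fun Y : M => L1 u * Y + Y * L2 u + c u) := by
  obtain ⟨C1, hC1⟩ := (isCompact_Icc (a := a) (b := b)).exists_bound_of_continuousOn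
    hL1.continuousOn
  obtain ⟨C2, hC2⟩ := (isCompact_Icc (a := a) (b := b)).exists_bound_of_continuousOn
    hL2.continuousOn
  refine ⟨Real.toNNReal (r * C1 + r * C2), fun u hu => ?_⟩
  apply LipschitzWith.of_dist_le_mul
  intro Y Z
  rw [dist_eq_norm, dist_eq_norm]
  have h1 : (L1 u * Y + Y * L2 u + c u) - (L1 u * Z + Z * L2 u + c u)
      = L1 u * (Y - Z) + (Y - Z) * L2 u := by
    rw [mul_sub, sub_mul]; abel
  rw [h1]
  have b1 := norm_mul_le' (L1 u) (Y - Z)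
  have b2 := norm_mul_le' (Y - Z) (L2 u)
  have e1 : ‖L1 u‖ ≤ C1 := hC1 u hu
  have e2 : ‖L2 u‖ ≤ C2 := hC2 u hu
  have coeK : (r * C1 + r * C2 : ℝ) ≤ (Real.toNNReal (r * C1 + r * C2) : ℝ) :=
    Real.le_coe_toNNReal _
  have hrnn : (0 : ℝ) ≤ r := Nat.cast_nonneg r
  have hYZ : (0 : ℝ) ≤ ‖Y - Z‖ := norm_nonneg _
  calc ‖L1 u * (Y - Z) + (Y - Z) * L2 u‖
      ≤ ‖L1 u * (Y - Z)‖ + ‖(Y - Z) * L2 u‖ := norm_add_le _ _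
    _ ≤ (r * C1 + r * C2) * ‖Y - Z‖ := by
        nlinarith [mul_le_mul_of_nonneg_right (mul_le_mul_of_nonneg_left e1 hrnn) hYZ,
          mul_le_mul_of_nonneg_left e2 (mul_nonneg hrnn hYZ)]
    _ ≤ (Real.toNNReal (r * C1 + r * C2) : ℝ) * ‖Y - Z‖ := by nlinarith

end RiccatiSemigroupAux

open RiccatiSemigroupAux Set in
/-- Semigroup decomposition of Riccati flow differences with respect to the
transition matrices `E_{s,t}(Q2)` generated by `u ↦ A_u − φ_u(Q2) S_u`:
`φ_t(Q1) − φ_t(Q2) = E_{s,t}(Q2)[φ_s(Q1)−φ_s(Q2)]E_{s,t}(Q2)ᵀ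
  − ∫_s^t E_{u,t}(Q2)[φ_u(Q1)−φ_u(Q2)] S_u [φ_u(Q1)−φ_u(Q2)] E_{u,t}(Q2)ᵀ du`. -/
theorem riccati_flow_semigroup_decomposition (r : ℕ)
    (A S : ℝ → Matrix (Fin r) (Fin r) ℝ)
    (hAcont : Continuous A) (hScont : Continuous S)
    (hS : ∀ t : ℝ, (S t).PosSemidef)
    (R1 : Matrix (Fin r) (Fin r) ℝ) (hR1 : R1.PosDef)
    (Q1 Q2 : Matrix (Fin r) (Fin r) ℝ) (hQ1 : Q1.PosDef) (hQ2 : Q2.PosDef)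
    (φ1 φ2 : ℝ → Matrix (Fin r) (Fin r) ℝ)
    (hφ1sym : ∀ t : ℝ, (φ1 t).IsSymm) (hφ2sym : ∀ t : ℝ, (φ2 t).IsSymm)
    (hφ10 : φ1 0 = Q1) (hφ20 : φ2 0 = Q2)
    (hφ1 : ∀ t : ℝ, HasDerivAt φ1
      (A t * φ1 t + φ1 t * (A t)ᵀ - φ1 t * S t * φ1 t + R1) t)
    (hφ2 : ∀ t : ℝ, HasDerivAt φ2
      (A t * φ2 t + φ2 t * (A t)ᵀ - φ2 t * S t * φ2 t + R1) t)
    (E : ℝ → ℝ → Matrix (Fin r) (Fin r) ℝ)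
    (hE0 : ∀ s : ℝ, E s s = 1)
    (hE : ∀ s t : ℝ, HasDerivAt (fun u => E s u)
      ((A t - φ2 t * S t) * E s t) t) :
    ∀ s t : ℝ, 0 ≤ s → s ≤ t →
      φ1 t - φ2 t =
        E s t * (φ1 s - φ2 s) * (E s t)ᵀ -
        ∫ u in s..t, E u t * (φ1 u - φ2 u) * S u * (φ1 u - φ2 u) * (E u t)ᵀ := by
  intro s t hs hst
  have hφ1c : Continuous φ1 := continuous_iff_continuousAt.2 fun u => (hφ1 u).continuousAt
  have hφ2c : Continuous φ2 := continuous_iff_continuousAt.2 fun u => (hφ2 u).continuousAt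
  set L : ℝ → Matrix (Fin r) (Fin r) ℝ := fun u => A u - φ2 u * S u with hLdef
  have hLc : Continuous L := hAcont.sub (hφ2c.matrix_mul hScont)
  have hE' : ∀ a u, HasDerivAt (fun x => E a x) (L u * E a u) u := fun a u => hE a u
  have hEc : ∀ a, Continuous (fun u => E a u) :=
    fun a => continuous_iff_continuousAt.2 fun u => (hE a u).continuousAt
  have hlinv : ∀ a b : ℝ, ∃ K : NNReal, ∀ u ∈ Icc a b,
      LipschitzWith K (fun Y : Matrix (Fin r) (Fin r) ℝ => L u * Y + Y * 0 + 0) :=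
    fun a b => affine_lip L (fun _ => 0) (fun _ => 0) hLc continuous_const a b
  have semi : ∀ a b c : ℝ, E a c = E b c * E a b := by
    intro a b c
    exact ode_unique (fun u Y => L u * Y + Y * 0 + 0) hlinv
      (fun u => E a u) (fun u => E b u * E a b)
      (fun u => by simpa using hE' a u)
      (fun u => by
        have := hasDerivAt_mul (hE' b u) (hasDerivAt_const u (E a b))
        simpa [mul_assoc] using this)
      b (by simp [hE0 b]) c
  have inv1 : ∀ a b : ℝ, E a b * E b a = 1 := by
    intro a b
    have h := semi b a b
    rw [hE0 b] at h
    exact h.symm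
  have hEfst : ∀ c : ℝ, Continuous (fun u => E u c) := by
    intro c
    have hinv : ∀ u, E u c = (E c u)⁻¹ := fun u =>
      (Matrix.inv_eq_right_inv (inv1 c u)).symm
    have hdet : ∀ u, (E c u).det ≠ 0 := fun u =>
      (Matrix.isUnit_det_of_right_inverse (inv1 c u)).ne_zero
    have hcont : Continuous fun u => (E c u)⁻¹ := by
      simp only [Matrix.inv_def, Ring.inverse_eq_inv']
      exact (((hEc c).matrix_det).inv₀ hdet).smul ((hEc c).matrix_adjugate)
    rw [show (fun u => E u c) = fun u => (E c u)⁻¹ from funext hinv]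
    exact hcont
  set Δ : ℝ → Matrix (Fin r) (Fin r) ℝ := fun u => φ1 u - φ2 u with hΔdef
  set X : ℝ → Matrix (Fin r) (Fin r) ℝ := fun u => Δ u * S u * Δ u with hXdef
  have hΔc : Continuous Δ := hφ1c.sub hφ2c
  have hXc : Continuous X := (hΔc.matrix_mul hScont).matrix_mul hΔc
  have hΔd : ∀ u, HasDerivAt Δ (L u * Δ u + Δ u * (L u)ᵀ + -(X u)) u := by
    intro u
    have h := (hφ1 u).sub (hφ2 u)
    have hSsym : (S u)ᵀ = S u := by
      rw [← Matrix.conjTranspose_eq_transpose_of_trivial]; exact (hS u).1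
    have hφ2s : (φ2 u)ᵀ = φ2 u := hφ2sym u
    refine h.congr_deriv ?_
    simp only [hΔdef, hXdef, hLdef, Matrix.transpose_sub, Matrix.transpose_mul, hSsym, hφ2s]
    noncomm_ring
  set Cm : ℝ → Matrix (Fin r) (Fin r) ℝ := fun u => E u s with hCmdef
  have hCc : Continuous Cm := hEfst s
  set f : ℝ → Matrix (Fin r) (Fin r) ℝ := fun u => Cm u * X u * (Cm u)ᵀ with hfdef
  have hfc : Continuous f := (hCc.matrix_mul hXc).matrix_mul hCc.matrix_transpose
  set W : ℝ → Matrix (Fin r) (Fin r) ℝ := fun x => Δ s - ∫ u in s..x, f u with hWdef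
  have hWd : ∀ x, HasDerivAt W (-(f x)) x := fun x => by
    have h := (hasDerivAt_const x (Δ s)).sub
      ((hfc.integral_hasStrictDerivAt s x).hasDerivAt)
    rw [zero_sub] at h
    exact h
  set G : ℝ → Matrix (Fin r) (Fin r) ℝ := fun x => E s x * W x * (E s x)ᵀ with hGdef
  have hGd : ∀ u, HasDerivAt G (L u * G u + G u * (L u)ᵀ + -(X u)) u := by
    intro u
    have h1 : HasDerivAt (fun x => E s x * W x) (L u * E s u * W u + E s u * -(f u)) u :=
      hasDerivAt_mul (hE' s u) (hWd u)
    have h2 : HasDerivAt G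
        ((L u * E s u * W u + E s u * -(f u)) * (E s u)ᵀ + E s u * W u * (L u * E s u)ᵀ) u :=
      hasDerivAt_mul h1 (hasDerivAt_transpose (hE' s u))
    have hfX : E s u * f u * (E s u)ᵀ = X u := by
      have hEC : E s u * Cm u = 1 := inv1 s u
      have h3 : (Cm u)ᵀ * (E s u)ᵀ = 1 := by
        rw [← Matrix.transpose_mul, hEC, Matrix.transpose_one]
      simp only [hfdef]
      calc E s u * (Cm u * X u * (Cm u)ᵀ) * (E s u)ᵀ
          = (E s u * Cm u) * (X u * ((Cm u)ᵀ * (E s u)ᵀ)) := by noncomm_ring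
        _ = X u := by rw [hEC, h3, one_mul, mul_one]
    convert h2 using 1
    simp only [hGdef]
    rw [← hfX]
    simp only [Matrix.transpose_mul]
    noncomm_ring
  have hvlip := fun a b => affine_lip L (fun u => (L u)ᵀ) (fun u => -(X u)) hLc
      hLc.matrix_transpose a b
  have hGs : Δ s = G s := by
    simp [hGdef, hWdef, hE0 s, intervalIntegral.integral_same, Matrix.transpose_one]
  have main : Δ t = G t :=
    ode_unique (fun u Y => L u * Y + Y * (L u)ᵀ + -(X u)) hvlip Δ G hΔd hGd s hGs t
  have hfint := hfc.intervalIntegrable (μ := MeasureTheory.volume) s t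
  let Tl : Matrix (Fin r) (Fin r) ℝ →ₗ[ℝ] Matrix (Fin r) (Fin r) ℝ :=
    { toFun := fun Y => E s t * Y * (E s t)ᵀ
      map_add' := fun Y Z => by simp [mul_add, add_mul]
      map_smul' := fun c Y => by simp [Matrix.mul_smul, Matrix.smul_mul] }
  let T := LinearMap.toContinuousLinearMap Tl
  have hTl : ∀ Y, T Y = E s t * Y * (E s t)ᵀ := fun Y => rfl
  have hTint : (∫ u in s..t, T (f u)) = T (∫ u in s..t, f u) :=
    T.intervalIntegral_comp_comm hfint
  have hint_eq : ∀ u, E u t * (φ1 u - φ2 u) * S u * (φ1 u - φ2 u) * (E u t)ᵀ = T (f u) := by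
    intro u
    rw [hTl]
    simp only [hfdef, hXdef, hΔdef, hCmdef]
    rw [semi u s t]
    simp only [Matrix.transpose_mul]
    noncomm_ring
  rw [show (φ1 t - φ2 t) = G t from main]
  simp only [hGdef, hWdef]
  simp only [hint_eq]
  rw [hTint, hTl]
  rw [mul_sub, sub_mul]
end

section
/- The Riccati flow is monotone with respect to the Loewner order: if Q1 ≤ Q2 (i.e. Q2 − Q1 is positive semi-definite) then φ_t(Q1) ≤ φ_t(Q2) for all t ≥ 0. -/
open Matrix Set Filter Topology

attribute [local instance] Matrix.normedAddCommGroup Matrix.normedSpace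

private lemma real_conjTranspose_eq_transpose {r : ℕ} (M : Matrix (Fin r) (Fin r) ℝ) :
    Mᴴ = Mᵀ := by
  ext i j; simp [conjTranspose_apply]

private lemma isHermitian_of_isSymm {r : ℕ} {M : Matrix (Fin r) (Fin r) ℝ}
    (h : M.IsSymm) : M.IsHermitian := by
  rw [IsHermitian, real_conjTranspose_eq_transpose]; exact h

private lemma symm_dot {r : ℕ} {M : Matrix (Fin r) (Fin r) ℝ} (hM : M.IsSymm)
    (v w : Fin r → ℝ) : v ⬝ᵥ (M *ᵥ w) = (M *ᵥ v) ⬝ᵥ w := by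
  rw [dotProduct_mulVec, ← mulVec_transpose, hM]

/-- Monotonicity of the Riccati flow with respect to the Loewner order:
if `Q2 − Q1` is positive semi-definite then `φ_t(Q2) − φ_t(Q1)` is positive
semi-definite for all `t ≥ 0`. -/
theorem riccati_flow_monotone (r : ℕ)
    (A S : ℝ → Matrix (Fin r) (Fin r) ℝ)
    (hAcont : Continuous A) (hScont : Continuous S)
    (hS : ∀ t : ℝ, (S t).PosSemidef)
    (R1 : Matrix (Fin r) (Fin r) ℝ) (hR1 : R1.PosDef)
    (Q1 Q2 : Matrix (Fin r) (Fin r) ℝ) (hQ1 : Q1.PosDef) (hQ2 : Q2.PosDef)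
    (hle : (Q2 - Q1).PosSemidef)
    (φ1 φ2 : ℝ → Matrix (Fin r) (Fin r) ℝ)
    (hφ1sym : ∀ t : ℝ, (φ1 t).IsSymm) (hφ2sym : ∀ t : ℝ, (φ2 t).IsSymm)
    (hφ10 : φ1 0 = Q1) (hφ20 : φ2 0 = Q2)
    (hφ1 : ∀ t : ℝ, HasDerivAt φ1
      (A t * φ1 t + φ1 t * (A t)ᵀ - φ1 t * S t * φ1 t + R1) t)
    (hφ2 : ∀ t : ℝ, HasDerivAt φ2
      (A t * φ2 t + φ2 t * (A t)ᵀ - φ2 t * S t * φ2 t + R1) t) :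
    ∀ t : ℝ, 0 ≤ t → (φ2 t - φ1 t).PosSemidef := by
  intro T hT
  -- basic continuity facts
  have hφ1c : Continuous φ1 := continuous_iff_continuousAt.mpr fun t => (hφ1 t).continuousAt
  have hφ2c : Continuous φ2 := continuous_iff_continuousAt.mpr fun t => (hφ2 t).continuousAt
  set Δ : ℝ → Matrix (Fin r) (Fin r) ℝ := fun t => φ2 t - φ1 t with hΔdef
  have hΔc : Continuous Δ := hφ2c.sub hφ1c
  have hΔsym : ∀ t, (Δ t).IsSymm := by
    intro t
    rw [Matrix.IsSymm, hΔdef]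
    simp only [transpose_sub]
    rw [hφ2sym t, hφ1sym t]
  have hΔ0 : Δ 0 = Q2 - Q1 := by rw [hΔdef]; simp [hφ10, hφ20]
  -- the comparison matrix B and its size β
  set B : ℝ → Matrix (Fin r) (Fin r) ℝ := fun t =>
    A t + (A t)ᵀ - (2⁻¹ : ℝ) • ((φ1 t + φ2 t) * S t + S t * (φ1 t + φ2 t)) with hBdef
  have hBc : Continuous B := by
    apply Continuous.sub (hAcont.add hAcont.matrix_transpose)
    exact Continuous.const_smul
      (((hφ1c.add hφ2c).matrix_mul hScont).add (hScont.matrix_mul (hφ1c.add hφ2c))) (2⁻¹ : ℝ)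
  set β : ℝ → ℝ := fun t => ∑ i, ∑ j, |B t i j| with hβdef
  have hβc : Continuous β := by
    apply continuous_finset_sum _ fun i _ => continuous_finset_sum _ fun j _ => ?_
    exact (hBc.matrix_elem i j).abs
  obtain ⟨u, hu⟩ := (isCompact_Icc.image_of_continuousOn hβc.continuousOn).bddAbove
  set c : ℝ := max u 0 + 1 with hcdef
  have hc1 : (1 : ℝ) ≤ c := by
    rw [hcdef]; have := le_max_right u (0:ℝ); linarith
  have hcβ : ∀ t ∈ Icc (0:ℝ) T, β t < c := by
    intro t ht
    have h1 : β t ≤ u := hu ⟨t, ht, rfl⟩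
    have := le_max_left u (0:ℝ)
    rw [hcdef]; linarith
  -- the key positivity claim for the shifted flow
  have key : ∀ ε : ℝ, 0 < ε → ∀ x : Fin r → ℝ, x ≠ 0 →
      0 < x ⬝ᵥ ((Δ T + (ε * Real.exp (c * T)) • (1 : Matrix (Fin r) (Fin r) ℝ)) *ᵥ x) := by
    intro ε hε
    set g : ℝ → Matrix (Fin r) (Fin r) ℝ :=
      fun t => Δ t + (ε * Real.exp (c * t)) • (1 : Matrix (Fin r) (Fin r) ℝ) with hgdef
    set q : ℝ → (Fin r → ℝ) → ℝ := fun t x => x ⬝ᵥ (g t *ᵥ x) with hqdef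
    suffices hgood : ∀ t ∈ Icc (0:ℝ) T, ∀ x : Fin r → ℝ, x ≠ 0 → 0 < q t x by
      intro x hx; exact hgood T ⟨hT, le_refl T⟩ x hx
    by_contra hbad
    push_neg at hbad
    obtain ⟨t1, ht1, x1, hx1ne, hx1⟩ := hbad
    set bad : Set ℝ := {t | t ∈ Icc (0:ℝ) T ∧ ∃ x : Fin r → ℝ, x ≠ 0 ∧ q t x ≤ 0} with hbaddef
    have hbadne : bad.Nonempty := ⟨t1, ht1, x1, hx1ne, hx1⟩
    have hbddb : BddBelow bad := ⟨0, fun t ht => ht.1.1⟩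
    set t0 : ℝ := sInf bad with ht0def
    have ht00 : 0 ≤ t0 := le_csInf hbadne fun t ht => ht.1.1
    have ht0T : t0 ≤ T := le_trans (csInf_le hbddb ⟨ht1, x1, hx1ne, hx1⟩) ht1.2
    have hbefore : ∀ s, 0 ≤ s → s < t0 → ∀ y, 0 ≤ q s y := by
      intro s hs0 hst0 y
      rcases eq_or_ne y 0 with rfl | hy
      · simp [hqdef]
      · by_contra h
        push_neg at h
        have hsmem : s ∈ bad := ⟨⟨hs0, hst0.le.trans ht0T⟩, y, hy, h.le⟩
        exact absurd (csInf_le hbddb hsmem) (not_le.mpr hst0)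
    -- a sequence in bad converging to t0
    have hseq : ∀ n : ℕ, ∃ t ∈ bad, t < t0 + 1 / (n + 1) := by
      intro n
      apply exists_lt_of_csInf_lt hbadne
      have : (0:ℝ) < 1 / (n + 1) := by positivity
      linarith
    choose tn htnmem htnlt using hseq
    have htnge : ∀ n, t0 ≤ tn n := fun n => csInf_le hbddb (htnmem n)
    have htnlim : Tendsto tn atTop (𝓝 t0) := by
      have h1 : Tendsto (fun n : ℕ => t0 + 1 / ((n:ℝ) + 1)) atTop (𝓝 (t0 + 0)) :=
        tendsto_const_nhds.add tendsto_one_div_add_atTop_nhds_zero_nat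
      rw [add_zero] at h1
      exact tendsto_of_tendsto_of_tendsto_of_le_of_le tendsto_const_nhds h1 htnge
        fun n => (htnlt n).le
    choose xn hxnprop using fun n => (htnmem n).2
    set yn : ℕ → (Fin r → ℝ) := fun n => ‖xn n‖⁻¹ • xn n with hyndef
    have hynsph : ∀ n, yn n ∈ Metric.sphere (0 : Fin r → ℝ) 1 := by
      intro n
      rw [mem_sphere_zero_iff_norm, hyndef]
      simp only [norm_smul, norm_inv, norm_norm]
      exact inv_mul_cancel₀ (norm_ne_zero_iff.mpr (hxnprop n).1)
    have hynq : ∀ n, q (tn n) (yn n) ≤ 0 := by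
      intro n
      have hscale : q (tn n) (yn n) = ‖xn n‖⁻¹ * (‖xn n‖⁻¹ * q (tn n) (xn n)) := by
        rw [hqdef, hyndef]
        simp only [Matrix.mulVec_smul, smul_dotProduct, dotProduct_smul, smul_eq_mul]
      rw [hscale]
      have h1 : (0:ℝ) ≤ ‖xn n‖⁻¹ := by positivity
      exact mul_nonpos_of_nonneg_of_nonpos h1
        (mul_nonpos_of_nonneg_of_nonpos h1 (hxnprop n).2)
    obtain ⟨x, hxsph, ψ, hψmono, hxlim⟩ :=
      (isCompact_sphere (0 : Fin r → ℝ) 1).tendsto_subseq hynsph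
    have hxnorm : ‖x‖ = 1 := mem_sphere_zero_iff_norm.mp hxsph
    have hxne : x ≠ 0 := by
      intro h; rw [h, norm_zero] at hxnorm; exact one_ne_zero hxnorm.symm
    -- joint continuity of q
    have hgc : Continuous g := by
      apply hΔc.add
      exact (continuous_const.mul (Real.continuous_exp.comp
        (continuous_const.mul continuous_id))).smul continuous_const
    have hqc : Continuous fun p : ℝ × (Fin r → ℝ) => q p.1 p.2 := by
      apply Continuous.dotProduct continuous_snd
      exact (hgc.comp continuous_fst).matrix_mulVec continuous_snd
    have hq0 : q t0 x ≤ 0 := by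
      have hlim : Tendsto (fun n => q (tn (ψ n)) (yn (ψ n))) atTop (𝓝 (q t0 x)) := by
        have := (hqc.tendsto (t0, x)).comp
          (((htnlim.comp hψmono.tendsto_atTop)).prodMk_nhds hxlim)
        exact this
      exact le_of_tendsto hlim (Eventually.of_forall fun n => hynq (ψ n))
    -- g t0 is PSD
    have hpsd : ∀ y, 0 ≤ q t0 y := by
      rcases eq_or_lt_of_le ht00 with h0 | h0
      · intro y
        have hq0y : q t0 y = y ⬝ᵥ ((Q2 - Q1) *ᵥ y) + (ε * Real.exp (c * t0)) * (y ⬝ᵥ y) := by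
          rw [hqdef, hgdef]
          simp only [← h0, hΔ0, Matrix.add_mulVec, Matrix.smul_mulVec, Matrix.one_mulVec,
            dotProduct_add, dotProduct_smul, smul_eq_mul]
        rw [hq0y]
        have h1 : 0 ≤ y ⬝ᵥ ((Q2 - Q1) *ᵥ y) := by
          have := hle.dotProduct_mulVec_nonneg y
          simpa using this
        have h2 : 0 ≤ y ⬝ᵥ y := by
          apply Finset.sum_nonneg; intro i _; exact mul_self_nonneg _
        have h3 : 0 < Real.exp (c * t0) := Real.exp_pos _
        have h4 : 0 ≤ ε * Real.exp (c * t0) * (y ⬝ᵥ y) :=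
          mul_nonneg (mul_nonneg hε.le h3.le) h2
        linarith
      · intro y
        have hev : ∀ᶠ s in 𝓝[<] t0, 0 ≤ q s y := by
          filter_upwards [Ioo_mem_nhdsLT h0] with s hs
          exact hbefore s hs.1.le hs.2 y
        have hcont : Tendsto (fun s => q s y) (𝓝[<] t0) (𝓝 (q t0 y)) := by
          have : Continuous fun s => q s y :=
            hqc.comp (continuous_id.prodMk continuous_const)
          exact (this.tendsto t0).mono_left nhdsWithin_le_nhds
        exact ge_of_tendsto hcont hev
    have hq00 : q t0 x = 0 := le_antisymm hq0 (hpsd x)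
    have hgsym : ∀ t, (g t).IsSymm := by
      intro t
      rw [Matrix.IsSymm, hgdef]
      simp only [transpose_add, transpose_smul, transpose_one]
      rw [hΔsym t]
    have hgPSD : (g t0).PosSemidef := by
      refine PosSemidef.of_dotProduct_mulVec_nonneg (isHermitian_of_isSymm (hgsym t0)) fun y => ?_
      simpa using hpsd y
    have hker : g t0 *ᵥ x = 0 := by
      apply (hgPSD.dotProduct_mulVec_zero_iff x).mp
      simpa using hq00
    set a : ℝ := ε * Real.exp (c * t0) with hadef
    have ha : 0 < a := by positivity
    have hΔx : Δ t0 *ᵥ x = (-a) • x := by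
      have h1 : Δ t0 *ᵥ x + a • x = 0 := by
        have := hker
        rw [hgdef] at this
        simpa [Matrix.add_mulVec, Matrix.smul_mulVec, Matrix.one_mulVec] using this
      have := eq_neg_of_add_eq_zero_left h1
      rw [this, neg_smul]
    -- derivative of t ↦ q t x at t0
    have hD : HasDerivAt Δ (A t0 * Δ t0 + Δ t0 * (A t0)ᵀ -
        (φ2 t0 * S t0 * φ2 t0 - φ1 t0 * S t0 * φ1 t0)) t0 := by
      have h := (hφ2 t0).sub (hφ1 t0)
      refine h.congr_deriv ?_
      rw [hΔdef]
      noncomm_ring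
    have hE : HasDerivAt (fun s => ε * Real.exp (c * s)) (a * c) t0 := by
      have h1 : HasDerivAt (fun s : ℝ => c * s) c t0 := by
        simpa using (hasDerivAt_id t0).const_mul c
      have h2 := (Real.hasDerivAt_exp (c * t0)).comp t0 h1
      have h3 := h2.const_mul ε
      refine h3.congr_deriv ?_
      rw [hadef]; ring
    set D' : Matrix (Fin r) (Fin r) ℝ := A t0 * Δ t0 + Δ t0 * (A t0)ᵀ -
        (φ2 t0 * S t0 * φ2 t0 - φ1 t0 * S t0 * φ1 t0) + (a * c) • 1 with hD'def
    have hg' : HasDerivAt g D' t0 := by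
      rw [hD'def]
      exact hD.add (hE.smul_const _)
    -- the quadratic form functional as a continuous linear map
    set L : Matrix (Fin r) (Fin r) ℝ →ₗ[ℝ] ℝ :=
      { toFun := fun M => x ⬝ᵥ (M *ᵥ x)
        map_add' := fun M N => by simp [Matrix.add_mulVec, dotProduct_add]
        map_smul' := fun s M => by simp [Matrix.smul_mulVec, dotProduct_smul] } with hLdef
    have hf : HasDerivAt (fun s => q s x) (x ⬝ᵥ (D' *ᵥ x)) t0 := by
      have := (LinearMap.toContinuousLinearMap L).hasFDerivAt.comp_hasDerivAt t0 hg'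
      exact this
    -- compute the derivative value
    have hid : φ2 t0 * S t0 * φ2 t0 - φ1 t0 * S t0 * φ1 t0 =
        (2⁻¹ : ℝ) • ((φ1 t0 + φ2 t0) * S t0 * Δ t0 + Δ t0 * (S t0 * (φ1 t0 + φ2 t0))) := by
      have h2 : (φ1 t0 + φ2 t0) * S t0 * Δ t0 + Δ t0 * (S t0 * (φ1 t0 + φ2 t0)) =
          (2 : ℝ) • (φ2 t0 * S t0 * φ2 t0 - φ1 t0 * S t0 * φ1 t0) := by
        rw [hΔdef]
        simp only [two_smul]
        noncomm_ring
      rw [h2, smul_smul]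
      norm_num
    have hmulΔ : ∀ M : Matrix (Fin r) (Fin r) ℝ,
        x ⬝ᵥ ((M * Δ t0) *ᵥ x) = -a * (x ⬝ᵥ (M *ᵥ x)) := by
      intro M
      rw [← Matrix.mulVec_mulVec, hΔx, Matrix.mulVec_smul, dotProduct_smul, smul_eq_mul]
    have hΔmul : ∀ M : Matrix (Fin r) (Fin r) ℝ,
        x ⬝ᵥ ((Δ t0 * M) *ᵥ x) = -a * (x ⬝ᵥ (M *ᵥ x)) := by
      intro M
      rw [← Matrix.mulVec_mulVec, symm_dot (hΔsym t0), hΔx, smul_dotProduct, smul_eq_mul]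
    have hval : x ⬝ᵥ (D' *ᵥ x) = a * (c * (x ⬝ᵥ x) - x ⬝ᵥ (B t0 *ᵥ x)) := by
      rw [hD'def, hid, hBdef]
      simp only [Matrix.add_mulVec, Matrix.sub_mulVec, Matrix.smul_mulVec,
        Matrix.one_mulVec, dotProduct_add, dotProduct_sub, dotProduct_smul, smul_eq_mul,
        hmulΔ, hΔmul]
      ring
    -- bound the B-quadratic form
    have hxcoord : ∀ i, |x i| ≤ 1 := by
      intro i
      have := norm_le_pi_norm x i
      rwa [hxnorm, Real.norm_eq_abs] at this
    have hBbound : x ⬝ᵥ (B t0 *ᵥ x) ≤ β t0 := by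
      have hexpand : x ⬝ᵥ (B t0 *ᵥ x) = ∑ i, ∑ j, x i * (B t0 i j * x j) := by
        simp [dotProduct, Matrix.mulVec, Finset.mul_sum]
      rw [hexpand, hβdef]
      apply Finset.sum_le_sum
      intro i _
      apply Finset.sum_le_sum
      intro j _
      calc x i * (B t0 i j * x j) ≤ |x i * (B t0 i j * x j)| := le_abs_self _
        _ = |x i| * |B t0 i j| * |x j| := by rw [abs_mul, abs_mul]; ring
        _ ≤ 1 * |B t0 i j| * 1 := by
            apply mul_le_mul (mul_le_mul (hxcoord i) le_rfl (abs_nonneg _) (by norm_num))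
              (hxcoord j) (abs_nonneg _) (by positivity)
        _ = |B t0 i j| := by ring
    have hxx1 : 1 ≤ x ⬝ᵥ x := by
      have hne : Nonempty (Fin r) := by
        by_contra h
        rw [not_nonempty_iff] at h
        exact hxne (Subsingleton.elim x 0)
      obtain ⟨i, _, hi⟩ := Finset.exists_mem_eq_sup (Finset.univ : Finset (Fin r))
        Finset.univ_nonempty fun i => ‖x i‖₊
      have hxi : |x i| = 1 := by
        have h1 : ‖x‖ = ‖x i‖ := by
          rw [Pi.norm_def, hi, coe_nnnorm]
        rw [← Real.norm_eq_abs, ← h1, hxnorm]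
      have h2 : (1:ℝ) = x i * x i := by
        have := abs_mul_abs_self (x i)
        rw [hxi] at this
        linarith
      rw [show x ⬝ᵥ x = ∑ j, x j * x j from rfl, h2]
      exact Finset.single_le_sum (f := fun j => x j * x j)
        (fun j _ => mul_self_nonneg _) (Finset.mem_univ i)
    have hKpos : 0 < x ⬝ᵥ (D' *ᵥ x) := by
      rw [hval]
      have hβlt : x ⬝ᵥ (B t0 *ᵥ x) < c := lt_of_le_of_lt hBbound (hcβ t0 ⟨ht00, ht0T⟩)
      have hcx : c ≤ c * (x ⬝ᵥ x) := le_mul_of_one_le_right (by linarith) hxx1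
      have hpos : 0 < c * (x ⬝ᵥ x) - x ⬝ᵥ (B t0 *ᵥ x) := by linarith
      exact mul_pos ha hpos
    -- final contradiction
    rcases eq_or_lt_of_le ht00 with h0 | h0
    · -- t0 = 0 : but q 0 x > 0
      have hpos : 0 < q t0 x := by
        have hq0x : q t0 x = x ⬝ᵥ ((Q2 - Q1) *ᵥ x) + (ε * Real.exp (c * t0)) * (x ⬝ᵥ x) := by
          rw [hqdef, hgdef]
          simp only [← h0, hΔ0, Matrix.add_mulVec, Matrix.smul_mulVec, Matrix.one_mulVec,
            dotProduct_add, dotProduct_smul, smul_eq_mul]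
        rw [hq0x]
        have h1 : 0 ≤ x ⬝ᵥ ((Q2 - Q1) *ᵥ x) := by
          have := hle.dotProduct_mulVec_nonneg x
          simpa using this
        have h3 : 0 < Real.exp (c * t0) := Real.exp_pos _
        have h4 : 0 < ε * Real.exp (c * t0) * (x ⬝ᵥ x) :=
          mul_pos (mul_pos hε h3) (lt_of_lt_of_le one_pos hxx1)
        linarith
      exact absurd hq00 (ne_of_gt hpos)
    · have hslope : Tendsto (slope (fun s => q s x) t0) (𝓝[≠] t0) (𝓝 (x ⬝ᵥ (D' *ᵥ x))) :=
        hasDerivAt_iff_tendsto_slope.mp hf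
      have hev1 : ∀ᶠ s in 𝓝[<] t0, 0 < slope (fun s => q s x) t0 s := by
        have h1 : ∀ᶠ s in 𝓝[≠] t0, 0 < slope (fun s => q s x) t0 s :=
          hslope.eventually_const_lt hKpos
        exact h1.filter_mono (nhdsWithin_mono t0 fun y hy => ne_of_lt hy)
      have hev2 : ∀ᶠ s in 𝓝[<] t0, s ∈ Ioo 0 t0 :=
        eventually_of_mem (Ioo_mem_nhdsLT h0) fun s hs => hs
      obtain ⟨s, hs1, hs2⟩ := (hev1.and hev2).exists
      have hfs : 0 ≤ q s x := hbefore s hs2.1.le hs2.2 x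
      have hslopeval : slope (fun s => q s x) t0 s = q s x / (s - t0) := by
        rw [slope_def_field, hq00, sub_zero]
      rw [hslopeval] at hs1
      have hst : s - t0 < 0 := by linarith [hs2.2]
      have hcon : q s x / (s - t0) ≤ 0 := div_nonpos_of_nonneg_of_nonpos hfs hst.le
      linarith
  -- conclude: let ε → 0
  apply PosSemidef.of_dotProduct_mulVec_nonneg
  · apply isHermitian_of_isSymm
    rw [Matrix.IsSymm, transpose_sub, hφ2sym T, hφ1sym T]
  · intro y
    rcases eq_or_ne y 0 with rfl | hy
    · simp
    · have hkey : ∀ ε : ℝ, 0 < ε →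
          0 < y ⬝ᵥ ((φ2 T - φ1 T) *ᵥ y) + ε * Real.exp (c * T) * (y ⬝ᵥ y) := by
        intro ε hε
        have hk := key ε hε y hy
        rw [hΔdef] at hk
        rw [Matrix.add_mulVec, Matrix.smul_mulVec, Matrix.one_mulVec,
          dotProduct_add, dotProduct_smul, smul_eq_mul] at hk
        exact hk
      have hyy : 0 < y ⬝ᵥ y := by
        obtain ⟨i, hi⟩ := Function.ne_iff.mp hy
        rw [show y ⬝ᵥ y = ∑ j, y j * y j from rfl]
        apply Finset.sum_pos' (fun j _ => mul_self_nonneg _)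
        refine ⟨i, Finset.mem_univ i, ?_⟩
        have hyi : y i ≠ 0 := by simpa using hi
        exact mul_self_pos.mpr hyi
      set v : ℝ := y ⬝ᵥ ((φ2 T - φ1 T) *ᵥ y) with hvdef
      by_contra hneg
      push_neg at hneg
      have hneg' : v < 0 := by
        have hsv : star y ⬝ᵥ ((φ2 T - φ1 T) *ᵥ y) = v := by simp [hvdef]
        rw [hsv] at hneg
        exact hneg
      set E : ℝ := Real.exp (c * T) with hEdef
      have hE : 0 < E := Real.exp_pos _
      have hεpos : 0 < -v / (2 * E * (y ⬝ᵥ y)) := by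
        apply div_pos (by linarith)
        positivity
      have hfin := hkey _ hεpos
      have hcalc : -v / (2 * E * (y ⬝ᵥ y)) * E * (y ⬝ᵥ y) = -v / 2 := by
        field_simp
      rw [hcalc] at hfin
      linarith
end

section
/- The Riccati flow depends monotonically on the noise parameters: if R1(2) ≥ R1(1) > 0 and S_t(1) ≥ S_t(2) ≥ 0 for all t ≥ 0, and φ_t(Q,i) solves ∂_t P = A_t P + P A_t' − P S_t(i) P + R1(i) with common initial condition Q > 0, then φ_t(Q,2) ≥ φ_t(Q,1) for all t ≥ 0. -/
open Matrix

attribute [local instance] Matrix.normedAddCommGroup Matrix.normedSpace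

lemma rfm_star_triv {r : ℕ} (x : Fin r → ℝ) : star x = x := funext fun _ => rfl

lemma rfm_dp_self_nonneg {r : ℕ} (x : Fin r → ℝ) : 0 ≤ x ⬝ᵥ x :=
  Finset.sum_nonneg fun i _ => mul_self_nonneg _

lemma rfm_dp_self_pos {r : ℕ} {x : Fin r → ℝ} (hx : x ≠ 0) : 0 < x ⬝ᵥ x := by
  obtain ⟨i, hi⟩ := Function.ne_iff.mp hx
  refine Finset.sum_pos' (fun j _ => mul_self_nonneg _) ⟨i, Finset.mem_univ i, ?_⟩
  simpa using mul_self_pos.mpr hi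

lemma rfm_quad_bound {r : ℕ} (B : Matrix (Fin r) (Fin r) ℝ) (x : Fin r → ℝ) :
    x ⬝ᵥ B *ᵥ x ≤ r * ‖B‖ * (x ⬝ᵥ x) := by
  have h1 : x ⬝ᵥ B *ᵥ x ≤ ∑ i, ∑ j, |x i| * ‖B‖ * |x j| := by
    rw [dotProduct]
    refine Finset.sum_le_sum fun i _ => ?_
    rw [mulVec, dotProduct, Finset.mul_sum]
    refine Finset.sum_le_sum fun j _ => ?_
    calc x i * (B i j * x j) ≤ |x i * (B i j * x j)| := le_abs_self _
      _ = |x i| * (|B i j| * |x j|) := by rw [abs_mul, abs_mul]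
      _ ≤ |x i| * (‖B‖ * |x j|) := by
          have hB : |B i j| ≤ ‖B‖ := B.norm_entry_le_entrywise_sup_norm
          gcongr
      _ = |x i| * ‖B‖ * |x j| := by ring
  have h2 : ∑ i, ∑ j, |x i| * ‖B‖ * |x j| = ‖B‖ * ((∑ i, |x i|) * (∑ j, |x j|)) := by
    rw [Finset.sum_mul_sum]
    simp only [Finset.mul_sum]
    exact Finset.sum_congr rfl fun i _ => Finset.sum_congr rfl fun j _ => by ring
  have h3 : (∑ i, |x i|) * (∑ i, |x i|) ≤ r * (x ⬝ᵥ x) := by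
    have := sq_sum_le_card_mul_sum_sq (s := Finset.univ) (f := fun i : Fin r => |x i|)
    simpa [sq, dotProduct, Finset.card_univ, abs_mul_abs_self] using this
  have hBn : (0:ℝ) ≤ ‖B‖ := norm_nonneg _
  calc x ⬝ᵥ B *ᵥ x ≤ ‖B‖ * ((∑ i, |x i|) * (∑ j, |x j|)) := h2 ▸ h1
    _ ≤ ‖B‖ * (r * (x ⬝ᵥ x)) := by exact mul_le_mul_of_nonneg_left h3 hBn
    _ = r * ‖B‖ * (x ⬝ᵥ x) := by ring

/-- The quadratic form `B ↦ x ⬝ᵥ B *ᵥ x` as a continuous linear map. -/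
noncomputable def rfm_quadCLM {r : ℕ} (x : Fin r → ℝ) :
    Matrix (Fin r) (Fin r) ℝ →L[ℝ] ℝ :=
  LinearMap.toContinuousLinearMap
    { toFun := fun B => x ⬝ᵥ B *ᵥ x
      map_add' := fun B C => by simp [Matrix.add_mulVec, dotProduct_add]
      map_smul' := fun a B => by simp [Matrix.smul_mulVec, dotProduct_smul, smul_eq_mul]
    }

@[simp] lemma rfm_quadCLM_apply {r : ℕ} (x : Fin r → ℝ) (B : Matrix (Fin r) (Fin r) ℝ) :
    rfm_quadCLM x B = x ⬝ᵥ B *ᵥ x := rfl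

/-- Positive definiteness is stable under small Hermitian perturbations. -/
lemma rfm_posdef_nhds {r : ℕ} {A₀ : Matrix (Fin r) (Fin r) ℝ} (hA : A₀.PosDef) :
    ∃ δ > 0, ∀ B : Matrix (Fin r) (Fin r) ℝ, B.IsHermitian → ‖B - A₀‖ < δ → B.PosDef := by
  rcases isEmpty_or_nonempty (Fin r) with hr | hr
  · refine ⟨1, one_pos, fun B hB _ => ⟨hB, fun x hx => absurd ?_ hx⟩⟩
    ext i; exact absurd trivial (hr.elim i)
  · have hq : Continuous fun x : Fin r → ℝ => x ⬝ᵥ A₀ *ᵥ x := by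
      simp only [dotProduct, Matrix.mulVec]
      exact continuous_finset_sum _ fun i _ => (continuous_apply i).mul
        (continuous_finset_sum _ fun j _ => continuous_const.mul (continuous_apply j))
    have hsph : (Metric.sphere (0 : Fin r → ℝ) 1).Nonempty :=
      NormedSpace.sphere_nonempty.mpr zero_le_one
    obtain ⟨x₀, hx₀s, hmin⟩ := (isCompact_sphere (0 : Fin r → ℝ) 1).exists_isMinOn hsph
      hq.continuousOn
    set m : ℝ := x₀ ⬝ᵥ A₀ *ᵥ x₀ with hm
    have hx₀ : x₀ ≠ 0 := by
      intro h0
      have := mem_sphere_zero_iff_norm.mp hx₀s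
      rw [h0, norm_zero] at this; exact zero_ne_one this
    have hmpos : 0 < m := by
      have := hA.dotProduct_mulVec_pos hx₀
      rwa [rfm_star_triv] at this
    refine ⟨m / ((r : ℝ) ^ 2 + 1), by positivity, fun B hB hBA => Matrix.PosDef.of_dotProduct_mulVec_pos hB fun y hy => ?_⟩
    rw [rfm_star_triv]
    -- rescale y to the unit sphere
    set x : Fin r → ℝ := ‖y‖⁻¹ • y with hx
    have hyn : (0 : ℝ) < ‖y‖ := norm_pos_iff.mpr hy
    have hxs : x ∈ Metric.sphere (0 : Fin r → ℝ) 1 := by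
      rw [mem_sphere_zero_iff_norm, hx, norm_smul, norm_inv, norm_norm,
        inv_mul_cancel₀ hyn.ne']
    have hxx : x ⬝ᵥ x ≤ (r : ℝ) := by
      have : ∀ i, x i * x i ≤ 1 := by
        intro i
        have h1 : |x i| ≤ 1 := by
          have := norm_le_pi_norm x i
          rwa [mem_sphere_zero_iff_norm.mp hxs, Real.norm_eq_abs] at this
        nlinarith [abs_nonneg (x i), abs_mul_abs_self (x i)]
      calc x ⬝ᵥ x = ∑ i, x i * x i := rfl
        _ ≤ ∑ _i : Fin r, (1 : ℝ) := Finset.sum_le_sum fun i _ => this i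
        _ = (r : ℝ) := by simp
    have hsub : x ⬝ᵥ (A₀ - B) *ᵥ x ≤ (r : ℝ) * ‖B - A₀‖ * (x ⬝ᵥ x) := by
      have := rfm_quad_bound (A₀ - B) x
      rwa [norm_sub_rev] at this
    have hrd : (r : ℝ) * ‖B - A₀‖ * (x ⬝ᵥ x) < m := by
      have hr1 : (1 : ℝ) ≤ (r : ℝ) := by
        have : 0 < r := Fintype.card_pos_iff.mpr hr |>.trans_eq (Fintype.card_fin r)
        exact_mod_cast this
      have hxx0 : (0 : ℝ) ≤ x ⬝ᵥ x := rfm_dp_self_nonneg x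
      have h2 : (r : ℝ) * ‖B - A₀‖ * (x ⬝ᵥ x) ≤ (r:ℝ) * ‖B - A₀‖ * r := by
        have : (0:ℝ) ≤ (r:ℝ) * ‖B - A₀‖ := by positivity
        exact mul_le_mul_of_nonneg_left hxx this
      have h3 : (r:ℝ) * ‖B - A₀‖ * r < (r:ℝ) * (m / ((r : ℝ) ^ 2 + 1)) * r := by
        have hr0 : (0:ℝ) < (r:ℝ) := by linarith
        gcongr
      have h4 : (r:ℝ) * (m / ((r : ℝ) ^ 2 + 1)) * r < m := by
        rw [div_eq_mul_inv]
        have hd : (0:ℝ) < (r : ℝ) ^ 2 + 1 := by positivity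
        rw [show (r:ℝ) * (m * ((r : ℝ) ^ 2 + 1)⁻¹) * r = m * (((r:ℝ)^2) / ((r : ℝ) ^ 2 + 1)) by
          field_simp]
        nlinarith [(div_lt_one hd).mpr (by nlinarith : (r:ℝ)^2 < (r:ℝ)^2 + 1)]
      linarith
    have hxq : 0 < x ⬝ᵥ B *ᵥ x := by
      have hmx : m ≤ x ⬝ᵥ A₀ *ᵥ x := hmin hxs
      have hdiff : x ⬝ᵥ A₀ *ᵥ x - x ⬝ᵥ B *ᵥ x = x ⬝ᵥ (A₀ - B) *ᵥ x := by
        rw [Matrix.sub_mulVec, dotProduct_sub]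
      have := hsub
      linarith [hrd, hmx, hdiff ▸ hsub]
    -- undo the scaling
    have hyx : y ⬝ᵥ B *ᵥ y = ‖y‖ * ‖y‖ * (x ⬝ᵥ B *ᵥ x) := by
      rw [hx, Matrix.mulVec_smul, dotProduct_smul, smul_dotProduct, smul_eq_mul, smul_eq_mul]
      field_simp
    rw [hyx]
    positivity

/-- Monotone dependence of the Riccati flow on the parameters: if `R1(2) ≥ R1(1) > 0`
and `S_t(1) ≥ S_t(2) ≥ 0`, then the corresponding Riccati flows with common
positive definite initial condition `Q` satisfy `φ_t(Q,2) ≥ φ_t(Q,1)` for all `t ≥ 0`. -/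
theorem riccati_flow_parameter_monotone (r : ℕ)
    (A : ℝ → Matrix (Fin r) (Fin r) ℝ) (hAcont : Continuous A)
    (S1 S2 : ℝ → Matrix (Fin r) (Fin r) ℝ)
    (hS1cont : Continuous S1) (hS2cont : Continuous S2)
    (hS2 : ∀ t : ℝ, (S2 t).PosSemidef)
    (hS12 : ∀ t : ℝ, (S1 t - S2 t).PosSemidef)
    (R11 R12 : Matrix (Fin r) (Fin r) ℝ)
    (hR11 : R11.PosDef) (hR12 : R12.PosDef)
    (hR112 : (R12 - R11).PosSemidef)
    (Q : Matrix (Fin r) (Fin r) ℝ) (hQ : Q.PosDef)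
    (φ1 φ2 : ℝ → Matrix (Fin r) (Fin r) ℝ)
    (hφ1sym : ∀ t : ℝ, (φ1 t).IsSymm) (hφ2sym : ∀ t : ℝ, (φ2 t).IsSymm)
    (hφ10 : φ1 0 = Q) (hφ20 : φ2 0 = Q)
    (hφ1 : ∀ t : ℝ, HasDerivAt φ1
      (A t * φ1 t + φ1 t * (A t)ᵀ - φ1 t * S1 t * φ1 t + R11) t)
    (hφ2 : ∀ t : ℝ, HasDerivAt φ2
      (A t * φ2 t + φ2 t * (A t)ᵀ - φ2 t * S2 t * φ2 t + R12) t) :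
    ∀ t : ℝ, 0 ≤ t → (φ2 t - φ1 t).PosSemidef := by
  intro T hT
  have hherm : ∀ t : ℝ, (φ2 t - φ1 t).IsHermitian := by
    intro t
    show (φ2 t - φ1 t)ᴴ = φ2 t - φ1 t
    rw [Matrix.conjTranspose_eq_transpose_of_trivial, Matrix.transpose_sub,
      (hφ1sym t).eq, (hφ2sym t).eq]
  -- continuity of the flows
  have hφ1c : Continuous φ1 := continuous_iff_continuousAt.mpr fun t => (hφ1 t).continuousAt
  have hφ2c : Continuous φ2 := continuous_iff_continuousAt.mpr fun t => (hφ2 t).continuousAt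
  -- the matrix `Bm t` (twice the symmetrizing drift) and a bound `c₀` for it on `[0, T]`
  have hΔsym : ∀ t : ℝ, (φ2 t - φ1 t)ᵀ = φ2 t - φ1 t := by
    intro t; rw [Matrix.transpose_sub, (hφ1sym t).eq, (hφ2sym t).eq]
  have hS2sym : ∀ t : ℝ, (S2 t)ᵀ = S2 t := by
    intro t
    have h : (S2 t)ᴴ = S2 t := (hS2 t).1
    rwa [Matrix.conjTranspose_eq_transpose_of_trivial] at h
  set Bm : ℝ → Matrix (Fin r) (Fin r) ℝ :=
    fun t => (A t + A t) - (φ1 t + φ2 t) * S2 t with hBmdef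
  have hBmc : Continuous fun t => Bm t + (Bm t)ᵀ := by
    have h1 : Continuous Bm := (hAcont.add hAcont).sub ((hφ1c.add hφ2c).matrix_mul hS2cont)
    exact h1.add h1.matrix_transpose
  obtain ⟨c₀', hc₀'⟩ := (isCompact_Icc : IsCompact (Set.Icc (0:ℝ) T)).exists_bound_of_continuousOn
    hBmc.continuousOn
  set c₀ : ℝ := max c₀' 0 with hc₀def
  have hc₀ : ∀ t ∈ Set.Icc (0:ℝ) T, ‖Bm t + (Bm t)ᵀ‖ ≤ c₀ :=
    fun t ht => (hc₀' t ht).trans (le_max_left _ _)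
  have hc₀0 : (0:ℝ) ≤ c₀ := le_max_right _ _
  set c : ℝ := r * c₀ + 1 with hcdef
  -- main claim: the `ε`-perturbed flow is positive definite on `[0, T]`
  have main : ∀ ε : ℝ, 0 < ε → ∀ t ∈ Set.Icc (0:ℝ) T,
      (φ2 t - φ1 t + (ε * Real.exp (c * t)) • (1 : Matrix (Fin r) (Fin r) ℝ)).PosDef := by
    intro ε hε
    set g : ℝ → Matrix (Fin r) (Fin r) ℝ :=
      fun t => φ2 t - φ1 t + (ε * Real.exp (c * t)) • 1 with hgdef
    have hg : ∀ t : ℝ, HasDerivAt g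
        (((A t * φ2 t + φ2 t * (A t)ᵀ - φ2 t * S2 t * φ2 t + R12)
          - (A t * φ1 t + φ1 t * (A t)ᵀ - φ1 t * S1 t * φ1 t + R11))
          + (ε * Real.exp (c * t) * c) • (1 : Matrix (Fin r) (Fin r) ℝ)) t := by
      intro t
      have h1 : HasDerivAt (fun s : ℝ => c * s) c t := by
        simpa using (hasDerivAt_id t).const_mul c
      have h2 : HasDerivAt (fun s : ℝ => ε * Real.exp (c * s)) (ε * Real.exp (c * t) * c) t := by
        have := (h1.exp).const_mul ε
        simpa [mul_assoc] using this
      exact ((hφ2 t).sub (hφ1 t)).add (h2.smul_const (1 : Matrix (Fin r) (Fin r) ℝ))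
    have hgsym : ∀ t : ℝ, (g t).IsHermitian := by
      intro t
      show (g t)ᴴ = g t
      rw [Matrix.conjTranspose_eq_transpose_of_trivial, hgdef]
      simp only [Matrix.transpose_add, Matrix.transpose_smul, Matrix.transpose_one, hΔsym t]
    have hgcont : Continuous g := continuous_iff_continuousAt.mpr fun t => (hg t).continuousAt
    have hopen : IsOpen {t : ℝ | (g t).PosDef} := by
      rw [Metric.isOpen_iff]
      intro τ hτ
      obtain ⟨δ, hδ, hδP⟩ := rfm_posdef_nhds hτ
      obtain ⟨ρ, hρ, hball⟩ := Metric.continuousAt_iff.mp hgcont.continuousAt δ hδ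
      exact ⟨ρ, hρ, fun t ht => hδP _ (hgsym t) (by rw [← dist_eq_norm]; exact hball ht)⟩
    intro t₁ ht₁
    by_contra hbadt
    set bad : Set ℝ := Set.Icc (0:ℝ) T ∩ {t | (g t).PosDef}ᶜ with hbaddef
    have hbadne : bad.Nonempty := ⟨t₁, ht₁, hbadt⟩
    have hbadcl : IsClosed bad := isClosed_Icc.inter hopen.isClosed_compl
    have hbb : BddBelow bad := ⟨0, fun t ht => ht.1.1⟩
    set τ := sInf bad with hτdef
    have hτbad : τ ∈ bad := hbadcl.csInf_mem hbadne hbb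
    have hτIcc : τ ∈ Set.Icc (0:ℝ) T := hτbad.1
    have hg0 : (g 0).PosDef := by
      have hg0eq : g 0 = ε • (1 : Matrix (Fin r) (Fin r) ℝ) := by
        rw [hgdef]; simp [hφ10, hφ20]
      rw [hg0eq]
      refine Matrix.PosDef.of_dotProduct_mulVec_pos ?_ fun x hx => ?_
      · show (ε • (1 : Matrix (Fin r) (Fin r) ℝ))ᴴ = _
        rw [Matrix.conjTranspose_eq_transpose_of_trivial, Matrix.transpose_smul,
          Matrix.transpose_one]
      · rw [rfm_star_triv, Matrix.smul_mulVec, Matrix.one_mulVec, dotProduct_smul,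
          smul_eq_mul]
        exact mul_pos hε (rfm_dp_self_pos hx)
    have hτpos : 0 < τ := lt_of_le_of_ne hτIcc.1 (fun h => hτbad.2 (h ▸ hg0))
    have hgood : ∀ t : ℝ, 0 ≤ t → t < τ → (g t).PosDef := by
      intro t h0 hlt
      by_contra hP
      exact absurd (csInf_le hbb ⟨⟨h0, hlt.le.trans hτIcc.2⟩, hP⟩) (not_le.mpr hlt)
    have hgPSD : (g τ).PosSemidef := by
      refine Matrix.PosSemidef.of_dotProduct_mulVec_nonneg (hgsym τ) fun x => ?_
      rw [rfm_star_triv]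
      have hcont : Filter.Tendsto (fun t => x ⬝ᵥ (g t) *ᵥ x) (nhdsWithin τ (Set.Iio τ))
          (nhds (x ⬝ᵥ (g τ) *ᵥ x)) := by
        have hC : ContinuousAt (fun t => x ⬝ᵥ (g t) *ᵥ x) τ :=
          ((rfm_quadCLM x).continuous.comp hgcont).continuousAt
        exact hC.tendsto.mono_left nhdsWithin_le_nhds
      refine ge_of_tendsto hcont ?_
      filter_upwards [Ioo_mem_nhdsLT_of_mem ⟨hτpos, le_refl τ⟩] with t ht
      have := (hgood t ht.1.le ht.2).posSemidef.dotProduct_mulVec_nonneg x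
      rwa [rfm_star_triv] at this
    have hx₀ex : ∃ x, x ≠ 0 ∧ x ⬝ᵥ (g τ) *ᵥ x ≤ 0 := by
      by_contra h
      push_neg at h
      exact hτbad.2 (Matrix.PosDef.of_dotProduct_mulVec_pos (hgsym τ) fun x hx => by rw [rfm_star_triv]; exact h x hx)
    obtain ⟨x₀, hx₀ne, hx₀le⟩ := hx₀ex
    have hx₀ge : 0 ≤ x₀ ⬝ᵥ (g τ) *ᵥ x₀ := by
      have := hgPSD.dotProduct_mulVec_nonneg x₀; rwa [rfm_star_triv] at this
    have hx₀eq : x₀ ⬝ᵥ (g τ) *ᵥ x₀ = 0 := le_antisymm hx₀le hx₀ge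
    have hker : (g τ) *ᵥ x₀ = 0 :=
      (hgPSD.dotProduct_mulVec_zero_iff x₀).mp (by rwa [rfm_star_triv])
    -- the quadratic form along the flow
    set f : ℝ → ℝ := fun t => x₀ ⬝ᵥ (g t) *ᵥ x₀ with hfdef
    set Dτ : Matrix (Fin r) (Fin r) ℝ :=
      ((A τ * φ2 τ + φ2 τ * (A τ)ᵀ - φ2 τ * S2 τ * φ2 τ + R12)
        - (A τ * φ1 τ + φ1 τ * (A τ)ᵀ - φ1 τ * S1 τ * φ1 τ + R11))
        + (ε * Real.exp (c * τ) * c) • (1 : Matrix (Fin r) (Fin r) ℝ) with hDτdef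
    have hfd : HasDerivAt f (x₀ ⬝ᵥ Dτ *ᵥ x₀) τ := by
      have := ((rfm_quadCLM x₀).hasFDerivAt).comp_hasDerivAt τ (hg τ)
      exact this
    -- the derivative at `τ` is nonpositive (left minimum)
    have hle : x₀ ⬝ᵥ Dτ *ᵥ x₀ ≤ 0 := by
      rw [hasDerivAt_iff_tendsto_slope] at hfd
      have h2 : Filter.Tendsto (slope f τ) (nhdsWithin τ (Set.Iio τ))
          (nhds (x₀ ⬝ᵥ Dτ *ᵥ x₀)) :=
        hfd.mono_left (nhdsWithin_mono τ (fun t ht => ne_of_lt ht))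
      refine le_of_tendsto h2 ?_
      filter_upwards [Ioo_mem_nhdsLT_of_mem ⟨hτpos, le_refl τ⟩] with t ht
      have hft : 0 ≤ f t := by
        have := (hgood t ht.1.le ht.2).posSemidef.dotProduct_mulVec_nonneg x₀
        rwa [rfm_star_triv] at this
      have hfτ0 : f τ = 0 := hx₀eq
      rw [slope_def_field, hfτ0, sub_zero]
      apply div_nonpos_of_nonneg_of_nonpos hft
      linarith [ht.2]
    -- the derivative at `τ` is positive: contradiction
    set η : ℝ := ε * Real.exp (c * τ) with hηdef
    have hη : 0 < η := by positivity
    have hΔτ : φ2 τ - φ1 τ = g τ - η • (1 : Matrix (Fin r) (Fin r) ℝ) := by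
      rw [hgdef]; simp [hηdef]
    have hΔx : (φ2 τ - φ1 τ) *ᵥ x₀ = (-η) • x₀ := by
      rw [hΔτ, Matrix.sub_mulVec, hker, Matrix.smul_mulVec, Matrix.one_mulVec]
      simp [neg_smul]
    have hBmT : (Bm τ)ᵀ = ((A τ)ᵀ + (A τ)ᵀ) - S2 τ * (φ1 τ + φ2 τ) := by
      rw [hBmdef]
      simp only [Matrix.transpose_sub, Matrix.transpose_add, Matrix.transpose_mul,
        hS2sym τ, (hφ1sym τ).eq, (hφ2sym τ).eq]
    set N : Matrix (Fin r) (Fin r) ℝ := φ1 τ * (S1 τ - S2 τ) * φ1 τ + (R12 - R11) with hNdef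
    have hN : N.PosSemidef := by
      have h1 := (hS12 τ).mul_mul_conjTranspose_same (φ1 τ)
      rw [Matrix.conjTranspose_eq_transpose_of_trivial, (hφ1sym τ).eq] at h1
      exact h1.add hR112
    have key : ((A τ * φ2 τ + φ2 τ * (A τ)ᵀ - φ2 τ * S2 τ * φ2 τ + R12)
          - (A τ * φ1 τ + φ1 τ * (A τ)ᵀ - φ1 τ * S1 τ * φ1 τ + R11))
        + ((A τ * φ2 τ + φ2 τ * (A τ)ᵀ - φ2 τ * S2 τ * φ2 τ + R12)
          - (A τ * φ1 τ + φ1 τ * (A τ)ᵀ - φ1 τ * S1 τ * φ1 τ + R11))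
        = Bm τ * (φ2 τ - φ1 τ) + (φ2 τ - φ1 τ) * (Bm τ)ᵀ + (N + N) := by
      rw [hBmT, hBmdef, hNdef]
      noncomm_ring
    -- scalar consequences
    have e1 : x₀ ⬝ᵥ (Bm τ * (φ2 τ - φ1 τ)) *ᵥ x₀ = -(η * (x₀ ⬝ᵥ (Bm τ) *ᵥ x₀)) := by
      rw [← Matrix.mulVec_mulVec, hΔx, Matrix.mulVec_smul, dotProduct_smul]
      simp [smul_eq_mul]
    have hvm : x₀ ᵥ* (φ2 τ - φ1 τ) = (-η) • x₀ := by
      rw [← Matrix.mulVec_transpose, hΔsym τ, hΔx]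
    have e2 : x₀ ⬝ᵥ ((φ2 τ - φ1 τ) * (Bm τ)ᵀ) *ᵥ x₀
        = -(η * (x₀ ⬝ᵥ (Bm τ)ᵀ *ᵥ x₀)) := by
      rw [← Matrix.mulVec_mulVec, dotProduct_mulVec, hvm, smul_dotProduct, smul_eq_mul]
      ring
    have eN : 0 ≤ x₀ ⬝ᵥ N *ᵥ x₀ := by
      have := hN.dotProduct_mulVec_nonneg x₀; rwa [rfm_star_triv] at this
    have eB : x₀ ⬝ᵥ (Bm τ + (Bm τ)ᵀ) *ᵥ x₀ ≤ r * c₀ * (x₀ ⬝ᵥ x₀) := by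
      calc x₀ ⬝ᵥ (Bm τ + (Bm τ)ᵀ) *ᵥ x₀
          ≤ r * ‖Bm τ + (Bm τ)ᵀ‖ * (x₀ ⬝ᵥ x₀) := rfm_quad_bound _ _
        _ ≤ r * c₀ * (x₀ ⬝ᵥ x₀) := by
            apply mul_le_mul_of_nonneg_right _ (rfm_dp_self_nonneg x₀)
            exact mul_le_mul_of_nonneg_left (hc₀ τ hτIcc) (Nat.cast_nonneg r)
    have es : 0 < x₀ ⬝ᵥ x₀ := rfm_dp_self_pos hx₀ne
    -- apply the quadratic form to `key`
    have ekey := congrArg (fun M : Matrix (Fin r) (Fin r) ℝ => x₀ ⬝ᵥ M *ᵥ x₀) key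
    simp only [Matrix.add_mulVec, dotProduct_add, e1, e2] at ekey
    have eBsplit : x₀ ⬝ᵥ (Bm τ + (Bm τ)ᵀ) *ᵥ x₀
        = x₀ ⬝ᵥ (Bm τ) *ᵥ x₀ + x₀ ⬝ᵥ (Bm τ)ᵀ *ᵥ x₀ := by
      rw [Matrix.add_mulVec, dotProduct_add]
    have eDτ : x₀ ⬝ᵥ Dτ *ᵥ x₀
        = x₀ ⬝ᵥ (((A τ * φ2 τ + φ2 τ * (A τ)ᵀ - φ2 τ * S2 τ * φ2 τ + R12)
          - (A τ * φ1 τ + φ1 τ * (A τ)ᵀ - φ1 τ * S1 τ * φ1 τ + R11))) *ᵥ x₀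
          + η * c * (x₀ ⬝ᵥ x₀) := by
      rw [hDτdef, Matrix.add_mulVec, dotProduct_add, Matrix.smul_mulVec,
        Matrix.one_mulVec, dotProduct_smul, smul_eq_mul, hηdef]
    rw [eDτ] at hle
    have hcs : η * c * (x₀ ⬝ᵥ x₀) = ((r : ℝ) * c₀ + 1) * (η * (x₀ ⬝ᵥ x₀)) := by
      rw [hcdef]; ring
    have h1 : η * (x₀ ⬝ᵥ Bm τ *ᵥ x₀) + η * (x₀ ⬝ᵥ (Bm τ)ᵀ *ᵥ x₀)
        ≤ (r : ℝ) * c₀ * (η * (x₀ ⬝ᵥ x₀)) := by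
      calc η * (x₀ ⬝ᵥ Bm τ *ᵥ x₀) + η * (x₀ ⬝ᵥ (Bm τ)ᵀ *ᵥ x₀)
          = η * (x₀ ⬝ᵥ Bm τ *ᵥ x₀ + x₀ ⬝ᵥ (Bm τ)ᵀ *ᵥ x₀) := (mul_add _ _ _).symm
        _ ≤ η * ((r : ℝ) * c₀ * (x₀ ⬝ᵥ x₀)) :=
            mul_le_mul_of_nonneg_left (eBsplit ▸ eB) hη.le
        _ = (r : ℝ) * c₀ * (η * (x₀ ⬝ᵥ x₀)) := by ring
    have hrc0 : (0:ℝ) ≤ (r : ℝ) * c₀ := by positivity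
    have hηs : 0 < η * (x₀ ⬝ᵥ x₀) := mul_pos hη es
    nlinarith [mul_nonneg hrc0 hηs.le]
  -- conclude: let `ε → 0`
  refine Matrix.PosSemidef.of_dotProduct_mulVec_nonneg (hherm T) fun x => ?_
  rw [rfm_star_triv]
  have hεb : ∀ ε : ℝ, 0 < ε →
      -(ε * Real.exp (c * T) * (x ⬝ᵥ x)) ≤ x ⬝ᵥ (φ2 T - φ1 T) *ᵥ x := by
    intro ε hε
    have := (main ε hε T ⟨hT, le_refl T⟩).posSemidef.dotProduct_mulVec_nonneg x
    rw [rfm_star_triv, Matrix.add_mulVec, dotProduct_add, Matrix.smul_mulVec,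
      Matrix.one_mulVec, dotProduct_smul, smul_eq_mul] at this
    linarith
  by_contra hneg
  push_neg at hneg
  set v : ℝ := x ⬝ᵥ (φ2 T - φ1 T) *ᵥ x with hv
  set K : ℝ := Real.exp (c * T) * (x ⬝ᵥ x) with hK
  have hK0 : 0 ≤ K := mul_nonneg (Real.exp_pos _).le (rfm_dp_self_nonneg x)
  have hε' : 0 < -v / (2 * (K + 1)) := by
    apply div_pos (by linarith) (by linarith)
  have := hεb (-v / (2 * (K + 1))) hε'
  rw [mul_assoc] at this
  have hle2 : -(-v / (2 * (K + 1)) * K) ≤ v := this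
  have h2 : -v / (2 * (K + 1)) * K ≤ -v / 2 := by
    rw [div_mul_eq_mul_div, div_le_div_iff₀ (by linarith) (by norm_num)]
    nlinarith
  linarith
end

section
/- Let φ^o_t(Q) solve ∂_t P = A_t P + P A_t' − P S_t P with P_0 = Q positive definite. Then φ^o_t(Q) = E_t(A)(Q^{-1} + Ō_t)^{-1} E_t(A)', where Ō_t = ∫_0^t E_s(A)' S_s E_s(A) ds; moreover if Ō_t is invertible then φ^o_t(Q) ≤ O_t^{-1} with O_t = (E_t(A)')^{-1} Ō_t E_t(A)^{-1} the observability Gramian. -/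
open Matrix Set

attribute [local instance] Matrix.normedAddCommGroup Matrix.normedSpace

section Aux
variable {r : ℕ}

theorem hasDerivAt_entrywise {M : ℝ → Matrix (Fin r) (Fin r) ℝ} {M' : Matrix (Fin r) (Fin r) ℝ} {t : ℝ} :
    HasDerivAt M M' t ↔ ∀ i j, HasDerivAt (fun s => M s i j) (M' i j) t :=
  hasDerivAt_pi.trans (forall_congr' fun _ => hasDerivAt_pi)

theorem HasDerivAt.matMul_s14 {M N : ℝ → Matrix (Fin r) (Fin r) ℝ} {M' N' : Matrix (Fin r) (Fin r) ℝ} {t : ℝ}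
    (hM : HasDerivAt M M' t) (hN : HasDerivAt N N' t) :
    HasDerivAt (fun s => M s * N s) (M' * N t + M t * N') t := by
  rw [hasDerivAt_entrywise] at hM hN ⊢
  intro i j
  simp only [Matrix.mul_apply, Matrix.add_apply, ← Finset.sum_add_distrib]
  exact HasDerivAt.fun_sum fun k _ => ((hM i k).mul (hN k j))

theorem HasDerivAt.matTranspose_s14 {M : ℝ → Matrix (Fin r) (Fin r) ℝ} {M' : Matrix (Fin r) (Fin r) ℝ} {t : ℝ}
    (hM : HasDerivAt M M' t) : HasDerivAt (fun s => (M s)ᵀ) M'ᵀ t := by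
  rw [hasDerivAt_entrywise] at hM ⊢
  intro i j
  exact hM j i

theorem matDet_differentiableAt {M : ℝ → Matrix (Fin r) (Fin r) ℝ} {t : ℝ}
    (hM : ∀ i j, DifferentiableAt ℝ (fun s => M s i j) t) :
    DifferentiableAt ℝ (fun s => (M s).det) t := by
  simp only [Matrix.det_apply, Units.smul_def, zsmul_eq_mul]
  exact DifferentiableAt.fun_sum fun σ _ =>
    (DifferentiableAt.fun_finsetProd fun i _ => hM (σ i) i).const_mul _

theorem matAdjugate_differentiableAt {M : ℝ → Matrix (Fin r) (Fin r) ℝ} {t : ℝ}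
    (hM : ∀ i j, DifferentiableAt ℝ (fun s => M s i j) t) (i j : Fin r) :
    DifferentiableAt ℝ (fun s => (M s).adjugate i j) t := by
  simp only [Matrix.adjugate_apply]
  apply matDet_differentiableAt
  intro k l
  simp only [Matrix.updateRow_apply]
  by_cases hk : k = j <;> simp [hk, hM k l]

theorem matInv_differentiableAt {M : ℝ → Matrix (Fin r) (Fin r) ℝ} {t : ℝ}
    (hM : ∀ i j, DifferentiableAt ℝ (fun s => M s i j) t) (h : IsUnit (M t)) (i j : Fin r) :
    DifferentiableAt ℝ (fun s => (M s)⁻¹ i j) t := by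
  have hdet : (M t).det ≠ 0 := by
    have := (Matrix.isUnit_iff_isUnit_det _).mp h
    simpa [isUnit_iff_ne_zero] using this
  have hrw : ∀ s, (M s)⁻¹ i j = ((M s).det)⁻¹ * (M s).adjugate i j := by
    intro s
    rw [Matrix.inv_def, Matrix.smul_apply, Ring.inverse_eq_inv', smul_eq_mul]
  simp only [hrw]
  exact ((matDet_differentiableAt hM).inv hdet).mul (matAdjugate_differentiableAt hM i j)

theorem HasDerivAt.matInv {M : ℝ → Matrix (Fin r) (Fin r) ℝ} {M' : Matrix (Fin r) (Fin r) ℝ} {t : ℝ}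
    (hM : HasDerivAt M M' t) (h : IsUnit (M t)) :
    HasDerivAt (fun s => (M s)⁻¹) (-((M t)⁻¹ * M' * (M t)⁻¹)) t := by
  have hMe := hasDerivAt_entrywise.mp hM
  have hd : ∀ i j, DifferentiableAt ℝ (fun s => M s i j) t := fun i j => (hMe i j).differentiableAt
  have hdet : (M t).det ≠ 0 := by
    have := (Matrix.isUnit_iff_isUnit_det _).mp h
    simpa [isUnit_iff_ne_zero] using this
  have hW : DifferentiableAt ℝ (fun s => (M s)⁻¹) t := by
    exact differentiableAt_pi.2 fun i => differentiableAt_pi.2 fun j =>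
      matInv_differentiableAt hd h i j
  obtain ⟨W', hW'⟩ : ∃ W', HasDerivAt (fun s => (M s)⁻¹) W' t := ⟨_, hW.hasDerivAt⟩
  have hdetC : ContinuousAt (fun s => (M s).det) t := (matDet_differentiableAt hd).continuousAt
  have hev : ∀ᶠ s in nhds t, M s * (M s)⁻¹ = 1 := by
    filter_upwards [hdetC.eventually_ne hdet] with s hs
    exact Matrix.mul_nonsing_inv _ (isUnit_iff_ne_zero.mpr hs)
  have hconst : HasDerivAt (fun s => M s * (M s)⁻¹) 0 t :=
    (hasDerivAt_const t (1 : Matrix (Fin r) (Fin r) ℝ)).congr_of_eventuallyEq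
      (hev.mono fun s hs => hs)
  have hzero : M' * (M t)⁻¹ + M t * W' = 0 := (hM.matMul_s14 hW').unique hconst
  have h1 : M t * W' = -(M' * (M t)⁻¹) := by
    rw [eq_neg_iff_add_eq_zero, add_comm]; exact hzero
  have hWval : W' = -((M t)⁻¹ * M' * (M t)⁻¹) := by
    calc W' = ((M t)⁻¹ * M t) * W' := by
          rw [Matrix.nonsing_inv_mul _ (isUnit_iff_ne_zero.mpr hdet), Matrix.one_mul]
    _ = (M t)⁻¹ * (M t * W') := by rw [Matrix.mul_assoc]
    _ = -((M t)⁻¹ * M' * (M t)⁻¹) := by rw [h1, Matrix.mul_neg, Matrix.mul_assoc]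
  rwa [hWval] at hW'

theorem matNorm_mul_le (M N : Matrix (Fin r) (Fin r) ℝ) : ‖M * N‖ ≤ r * ‖M‖ * ‖N‖ := by
  have h0 : (0:ℝ) ≤ r * ‖M‖ * ‖N‖ := by positivity
  rw [Matrix.norm_le_iff h0]
  intro i j
  calc ‖(M * N) i j‖ = ‖∑ k, M i k * N k j‖ := by rw [Matrix.mul_apply]
    _ ≤ ∑ k, ‖M i k * N k j‖ := norm_sum_le _ _
    _ ≤ ∑ _k : Fin r, ‖M‖ * ‖N‖ := Finset.sum_le_sum fun k _ => by
        rw [norm_mul]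
        exact mul_le_mul (Matrix.norm_entry_le_entrywise_sup_norm M)
          (Matrix.norm_entry_le_entrywise_sup_norm N) (norm_nonneg _) (norm_nonneg _)
    _ = r * ‖M‖ * ‖N‖ := by simp [Finset.sum_const, Finset.card_univ, mul_assoc]

theorem matNorm_transpose (M : Matrix (Fin r) (Fin r) ℝ) : ‖Mᵀ‖ = ‖M‖ := by
  refine le_antisymm ?_ ?_
  · rw [Matrix.norm_le_iff (norm_nonneg M)]
    intro i j
    exact Matrix.norm_entry_le_entrywise_sup_norm M (i := j) (j := i)
  · rw [Matrix.norm_le_iff (norm_nonneg Mᵀ)]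
    intro i j
    exact Matrix.norm_entry_le_entrywise_sup_norm Mᵀ (i := j) (j := i)

theorem matNorm_mulVec_le (M : Matrix (Fin r) (Fin r) ℝ) (v : Fin r → ℝ) :
    ‖M *ᵥ v‖ ≤ r * ‖M‖ * ‖v‖ := by
  have h0 : (0:ℝ) ≤ r * ‖M‖ * ‖v‖ := by positivity
  rw [pi_norm_le_iff_of_nonneg h0]
  intro i
  calc ‖(M *ᵥ v) i‖ = ‖∑ k, M i k * v k‖ := rfl
    _ ≤ ∑ k, ‖M i k * v k‖ := norm_sum_le _ _
    _ ≤ ∑ _k : Fin r, ‖M‖ * ‖v‖ := Finset.sum_le_sum fun k _ => by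
        rw [norm_mul]
        exact mul_le_mul (Matrix.norm_entry_le_entrywise_sup_norm M)
          (norm_le_pi_norm v k) (norm_nonneg _) (norm_nonneg _)
    _ = r * ‖M‖ * ‖v‖ := by simp [Finset.sum_const, Finset.card_univ, mul_assoc]

theorem matIntegral_quadForm (f : ℝ → Matrix (Fin r) (Fin r) ℝ) (hf : Continuous f)
    (a b : ℝ) (x : Fin r → ℝ) :
    x ⬝ᵥ (∫ s in a..b, f s) *ᵥ x = ∫ s in a..b, x ⬝ᵥ (f s) *ᵥ x := by
  let L : Matrix (Fin r) (Fin r) ℝ →ₗ[ℝ] ℝ :=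
    { toFun := fun M => x ⬝ᵥ M *ᵥ x
      map_add' := fun M N => by simp [add_mulVec, dotProduct_add]
      map_smul' := fun c M => by simp [smul_mulVec, dotProduct_smul] }
  have := (LinearMap.toContinuousLinearMap L).intervalIntegral_comp_comm
    (μ := MeasureTheory.volume) (hf.intervalIntegrable a b)
  exact this.symm

theorem matIntegral_transpose (f : ℝ → Matrix (Fin r) (Fin r) ℝ) (hf : Continuous f)
    (a b : ℝ) :
    (∫ s in a..b, f s)ᵀ = ∫ s in a..b, (f s)ᵀ := by
  let L : Matrix (Fin r) (Fin r) ℝ →ₗ[ℝ] Matrix (Fin r) (Fin r) ℝ :=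
    { toFun := fun M => Mᵀ
      map_add' := fun M N => Matrix.transpose_add M N
      map_smul' := fun c M => Matrix.transpose_smul c M }
  have := (LinearMap.toContinuousLinearMap L).intervalIntegral_comp_comm
    (μ := MeasureTheory.volume) (hf.intervalIntegrable a b)
  exact this.symm

theorem matIntegral_posSemidef (f : ℝ → Matrix (Fin r) (Fin r) ℝ) (hf : Continuous f)
    (hpsd : ∀ s, (f s).PosSemidef) (t : ℝ) (ht : 0 ≤ t) :
    (∫ s in (0:ℝ)..t, f s).PosSemidef := by
  refine posSemidef_iff_dotProduct_mulVec.mpr ⟨?_, ?_⟩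
  · show _ᴴ = _
    rw [Matrix.conjTranspose_eq_transpose_of_trivial, matIntegral_transpose f hf]
    refine intervalIntegral.integral_congr fun s _ => ?_
    have h := (hpsd s).1.eq
    rwa [Matrix.conjTranspose_eq_transpose_of_trivial] at h
  · intro x
    have hsx : star x = x := by simp
    rw [hsx, matIntegral_quadForm f hf]
    refine intervalIntegral.integral_nonneg ht fun u _ => ?_
    have := (hpsd u).dotProduct_mulVec_nonneg x
    rwa [hsx] at this

theorem transition_isUnit (A : ℝ → Matrix (Fin r) (Fin r) ℝ) (hAcont : Continuous A)
    (E : ℝ → Matrix (Fin r) (Fin r) ℝ) (hE0 : E 0 = 1)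
    (hE : ∀ t : ℝ, HasDerivAt E (A t * E t) t) {t : ℝ} (ht : 0 ≤ t) :
    IsUnit (E t) := by
  obtain ⟨C, hC⟩ := (isCompact_Icc (a := (0:ℝ)) (b := t)).exists_bound_of_continuousOn
    hAcont.continuousOn
  suffices h : ∀ v : Fin r → ℝ, E t *ᵥ v = 0 → v = 0 by
    rw [← Matrix.mulVec_injective_iff_isUnit]
    intro x y hxy
    have hz : E t *ᵥ (x - y) = 0 := by rw [Matrix.mulVec_sub, hxy, sub_self]
    exact sub_eq_zero.mp (h _ hz)
  intro v hv
  set w : ℝ → (Fin r → ℝ) := fun s => E (t - s) *ᵥ v with hw_def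
  let L : Matrix (Fin r) (Fin r) ℝ →ₗ[ℝ] (Fin r → ℝ) :=
    { toFun := fun M => M *ᵥ v
      map_add' := fun M N => Matrix.add_mulVec M N v
      map_smul' := fun c M => by simp [Matrix.smul_mulVec] }
  have hw : ∀ s : ℝ, HasDerivAt w (-(A (t - s) *ᵥ w s)) s := by
    intro s
    have h1 : HasDerivAt (fun u : ℝ => t - u) (-1 : ℝ) s := by
      simpa using (hasDerivAt_id s).const_sub t
    have h2 : HasDerivAt (fun u : ℝ => E (t - u))
        ((-1 : ℝ) • (A (t - s) * E (t - s))) s := (hE (t - s)).scomp s h1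
    have h3 := ((LinearMap.toContinuousLinearMap L).hasFDerivAt).comp_hasDerivAt s h2
    have h4 : (LinearMap.toContinuousLinearMap L) ((-1 : ℝ) • (A (t - s) * E (t - s)))
        = -(A (t - s) *ᵥ w s) := by
      simp [L, Matrix.smul_mulVec, Matrix.mulVec_mulVec, Matrix.neg_mulVec, hw_def]
    exact h3.congr_deriv h4
  have hcont : ContinuousOn w (Icc 0 t) :=
    Continuous.continuousOn (continuous_iff_continuousAt.mpr fun s => (hw s).continuousAt)
  have hbound : ∀ s ∈ Ico 0 t, ‖-(A (t - s) *ᵥ w s)‖ ≤ (r * C) * ‖w s‖ + 0 := by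
    intro s hs
    have hts : t - s ∈ Icc 0 t := ⟨by linarith [hs.2], by linarith [hs.1]⟩
    rw [norm_neg, add_zero]
    calc ‖A (t - s) *ᵥ w s‖ ≤ r * ‖A (t - s)‖ * ‖w s‖ := matNorm_mulVec_le _ _
      _ ≤ r * C * ‖w s‖ := by
          apply mul_le_mul_of_nonneg_right _ (norm_nonneg _)
          exact mul_le_mul_of_nonneg_left (hC _ hts) (by positivity)
  have hzero : ∀ s ∈ Icc 0 t, ‖w s‖ ≤ gronwallBound 0 (r * C) 0 (s - 0) :=
    norm_le_gronwallBound_of_norm_deriv_right_le hcont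
      (fun s _ => (hw s).hasDerivWithinAt) (by simp [hw_def, hv]) hbound
  have hwt := hzero t ⟨ht, le_refl t⟩
  rw [gronwallBound_ε0_δ0] at hwt
  have hwt' : w t = v := by simp [hw_def, hE0]
  rw [hwt'] at hwt
  exact norm_le_zero_iff.mp hwt

theorem posDef_of_posSemidef_isUnit {M : Matrix (Fin r) (Fin r) ℝ}
    (h : M.PosSemidef) (hu : IsUnit M) : M.PosDef := by
  refine posDef_iff_dotProduct_mulVec.mpr ⟨h.1, fun x hx => ?_⟩
  rcases (h.dotProduct_mulVec_nonneg x).lt_or_eq with hlt | heq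
  · exact hlt
  · exfalso
    have h0 : M *ᵥ x = 0 := (h.dotProduct_mulVec_zero_iff x).mp heq.symm
    have hinj := Matrix.mulVec_injective_iff_isUnit.mpr hu
    exact hx (hinj (a₁ := x) (a₂ := 0) (by simpa using h0))

open scoped MatrixOrder in
private theorem sqrt_isUnit {M : Matrix (Fin r) (Fin r) ℝ} (hM : M.PosDef) :
    IsUnit (CFC.sqrt M) := by
  rw [Matrix.isUnit_iff_isUnit_det, isUnit_iff_ne_zero]
  intro h0
  have hs := CFC.sqrt_mul_sqrt_self M hM.posSemidef.nonneg
  have hdet : M.det = 0 := by rw [← hs, Matrix.det_mul, h0, mul_zero]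
  exact hM.det_pos.ne' hdet

open scoped MatrixOrder in
theorem one_sub_inv_posSemidef {P : Matrix (Fin r) (Fin r) ℝ}
    (hP : P.PosDef) (h1 : (P - 1).PosSemidef) :
    ((1 : Matrix (Fin r) (Fin r) ℝ) - P⁻¹).PosSemidef := by
  have hPinv : P⁻¹.PosDef := hP.inv
  set v := CFC.sqrt P⁻¹ with hv_def
  have hvv : v * v = P⁻¹ := CFC.sqrt_mul_sqrt_self _ hPinv.posSemidef.nonneg
  have hvherm : vᴴ = v := (CFC.sqrt_nonneg P⁻¹).posSemidef.1
  have hvd : IsUnit v.det := (Matrix.isUnit_iff_isUnit_det v).mp (sqrt_isUnit hPinv)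
  have hPd : IsUnit P.det := (Matrix.isUnit_iff_isUnit_det P).mp hP.isUnit
  have hP_eq : P = v⁻¹ * v⁻¹ := by
    rw [← Matrix.mul_inv_rev, hvv, Matrix.nonsing_inv_nonsing_inv P hPd]
  have hvPv : v * P * v = 1 := by
    rw [hP_eq, ← Matrix.mul_assoc, Matrix.mul_nonsing_inv v hvd, Matrix.one_mul,
      Matrix.nonsing_inv_mul v hvd]
  have key : (1 : Matrix (Fin r) (Fin r) ℝ) - P⁻¹ = v * (P - 1) * vᴴ := by
    rw [hvherm, Matrix.mul_sub, Matrix.mul_one, Matrix.sub_mul, hvPv, hvv]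
  rw [key]
  exact h1.mul_mul_conjTranspose_same v

open scoped MatrixOrder in
theorem inv_sub_inv_posSemidef {Am Bm : Matrix (Fin r) (Fin r) ℝ}
    (hA : Am.PosDef) (hB : Bm.PosDef) (hAB : (Bm - Am).PosSemidef) :
    (Am⁻¹ - Bm⁻¹).PosSemidef := by
  set s := CFC.sqrt Am with hs_def
  have hss : s * s = Am := CFC.sqrt_mul_sqrt_self _ hA.posSemidef.nonneg
  have hsherm : sᴴ = s := (CFC.sqrt_nonneg Am).posSemidef.1
  have hsd : IsUnit s.det := (Matrix.isUnit_iff_isUnit_det s).mp (sqrt_isUnit hA)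
  have huherm : (s⁻¹)ᴴ = s⁻¹ := by rw [Matrix.conjTranspose_nonsing_inv, hsherm]
  have huu : s⁻¹ * s⁻¹ = Am⁻¹ := by rw [← Matrix.mul_inv_rev, hss]
  have huAu : s⁻¹ * Am * s⁻¹ = 1 := by
    rw [← hss, ← Matrix.mul_assoc, Matrix.nonsing_inv_mul s hsd, Matrix.one_mul,
      Matrix.mul_nonsing_inv s hsd]
  have hMpsd : (s⁻¹ * Bm * s⁻¹).PosSemidef := by
    have := hB.posSemidef.mul_mul_conjTranspose_same s⁻¹
    rwa [huherm] at this
  have hsu_inv : IsUnit (s⁻¹) :=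
    Matrix.isUnit_nonsing_inv_iff.mpr ((Matrix.isUnit_iff_isUnit_det s).mpr hsd)
  have hMu : IsUnit (s⁻¹ * Bm * s⁻¹) := (hsu_inv.mul hB.isUnit).mul hsu_inv
  have hMpd : (s⁻¹ * Bm * s⁻¹).PosDef := posDef_of_posSemidef_isUnit hMpsd hMu
  have hM1 : (s⁻¹ * Bm * s⁻¹ - 1).PosSemidef := by
    have h2 : s⁻¹ * Bm * s⁻¹ - 1 = s⁻¹ * (Bm - Am) * (s⁻¹)ᴴ := by
      rw [huherm, Matrix.mul_sub, Matrix.sub_mul, huAu]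
    rw [h2]
    exact hAB.mul_mul_conjTranspose_same s⁻¹
  have hkey := one_sub_inv_posSemidef hMpd hM1
  have hfinal : Am⁻¹ - Bm⁻¹ =
      s⁻¹ * ((1 : Matrix (Fin r) (Fin r) ℝ) - (s⁻¹ * Bm * s⁻¹)⁻¹) * (s⁻¹)ᴴ := by
    have hMinv : (s⁻¹ * Bm * s⁻¹)⁻¹ = s * Bm⁻¹ * s := by
      rw [Matrix.mul_inv_rev, Matrix.mul_inv_rev, Matrix.nonsing_inv_nonsing_inv s hsd,
        Matrix.mul_assoc]
    rw [huherm, Matrix.mul_sub, Matrix.mul_one, Matrix.sub_mul, huu, hMinv]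
    congr 1
    rw [← Matrix.mul_assoc, ← Matrix.mul_assoc, Matrix.nonsing_inv_mul s hsd, Matrix.one_mul,
      Matrix.mul_assoc, Matrix.mul_nonsing_inv s hsd, Matrix.mul_one]
  rw [hfinal]
  exact hkey.mul_mul_conjTranspose_same s⁻¹

end Aux

/-- Explicit solution of `∂_t P = A_t P + P A_tᵀ − P S_t P`, `P_0 = Q > 0`:
`φ^o_t(Q) = E_t(A)(Q⁻¹ + Ō_t)⁻¹ E_t(A)ᵀ`, with `Ō_t = ∫_0^t E_s(A)ᵀ S_s E_s(A) ds`;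
moreover if `Ō_t` is invertible then `φ^o_t(Q) ≤ O_t⁻¹` for the observability Gramian
`O_t = (E_t(A)ᵀ)⁻¹ Ō_t E_t(A)⁻¹`. -/
theorem observability_riccati_flow_formula (r : ℕ)
    (A S : ℝ → Matrix (Fin r) (Fin r) ℝ)
    (hAcont : Continuous A) (hScont : Continuous S)
    (hS : ∀ t : ℝ, (S t).PosSemidef)
    (Q : Matrix (Fin r) (Fin r) ℝ) (hQ : Q.PosDef)
    (E : ℝ → Matrix (Fin r) (Fin r) ℝ)
    (hE0 : E 0 = 1)
    (hE : ∀ t : ℝ, HasDerivAt E (A t * E t) t)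
    (φo : ℝ → Matrix (Fin r) (Fin r) ℝ)
    (hφo0 : φo 0 = Q)
    (hφo : ∀ t : ℝ, HasDerivAt φo
      (A t * φo t + φo t * (A t)ᵀ - φo t * S t * φo t) t) :
    ∀ t : ℝ, 0 ≤ t →
      φo t = E t * (Q⁻¹ + ∫ s in (0:ℝ)..t, (E s)ᵀ * S s * E s)⁻¹ * (E t)ᵀ ∧
      (IsUnit (∫ s in (0:ℝ)..t, (E s)ᵀ * S s * E s) →
        ((((E t)ᵀ)⁻¹ * (∫ s in (0:ℝ)..t, (E s)ᵀ * S s * E s) * (E t)⁻¹)⁻¹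
          - φo t).PosSemidef) := by
  have hEcont : Continuous E := continuous_iff_continuousAt.mpr fun s => (hE s).continuousAt
  have hφcont : Continuous φo := continuous_iff_continuousAt.mpr fun s => (hφo s).continuousAt
  set f : ℝ → Matrix (Fin r) (Fin r) ℝ := fun s => (E s)ᵀ * S s * E s with hf_def
  have hfcont : Continuous f := (hEcont.matrix_transpose.matrix_mul hScont).matrix_mul hEcont
  have hfpsd : ∀ s, (f s).PosSemidef := fun s => by
    have h := (hS s).mul_mul_conjTranspose_same (E s)ᵀ
    rwa [Matrix.conjTranspose_eq_transpose_of_trivial, Matrix.transpose_transpose] at h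
  set N : ℝ → Matrix (Fin r) (Fin r) ℝ := fun u => Q⁻¹ + ∫ s in (0:ℝ)..u, f s with hN_def
  have hN' : ∀ u : ℝ, HasDerivAt N (f u) u := fun u =>
    ((hfcont.integral_hasStrictDerivAt 0 u).hasDerivAt).const_add Q⁻¹
  have hQd : IsUnit Q.det := (Matrix.isUnit_iff_isUnit_det Q).mp hQ.isUnit
  have hNpd : ∀ u : ℝ, 0 ≤ u → (N u).PosDef := fun u hu =>
    hQ.inv.add_posSemidef (matIntegral_posSemidef f hfcont hfpsd u hu)
  set G : ℝ → Matrix (Fin r) (Fin r) ℝ := fun u => E u * (N u)⁻¹ * (E u)ᵀ with hG_def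
  have hG' : ∀ u : ℝ, 0 ≤ u →
      HasDerivAt G (A u * G u + G u * (A u)ᵀ - G u * S u * G u) u := by
    intro u hu
    have hNu : IsUnit (N u) := (hNpd u hu).isUnit
    have hNinv : HasDerivAt (fun s => (N s)⁻¹) (-((N u)⁻¹ * f u * (N u)⁻¹)) u :=
      (hN' u).matInv hNu
    have h2 := ((hE u).matMul_s14 hNinv).matMul_s14 (hE u).matTranspose_s14
    convert h2 using 1
    simp only [hG_def, hf_def, Matrix.transpose_mul, Matrix.mul_assoc, Matrix.add_mul,
      Matrix.neg_mul, Matrix.mul_neg]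
    abel
  have hN0 : N 0 = Q⁻¹ := by simp [hN_def]
  have hG0 : G 0 = Q := by
    simp [hG_def, hN0, hE0, Matrix.nonsing_inv_nonsing_inv Q hQd]
  intro t ht
  have hGcont : ContinuousOn G (Icc 0 t) := fun u hu =>
    ((hG' u hu.1).continuousAt).continuousWithinAt
  obtain ⟨CA, hCA⟩ := (isCompact_Icc (a := (0:ℝ)) (b := t)).exists_bound_of_continuousOn
    hAcont.continuousOn
  obtain ⟨CS, hCS⟩ := (isCompact_Icc (a := (0:ℝ)) (b := t)).exists_bound_of_continuousOn
    hScont.continuousOn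
  obtain ⟨Cφ, hCφ⟩ := (isCompact_Icc (a := (0:ℝ)) (b := t)).exists_bound_of_continuousOn
    hφcont.continuousOn
  obtain ⟨CG, hCG⟩ := (isCompact_Icc (a := (0:ℝ)) (b := t)).exists_bound_of_continuousOn hGcont
  have hCA0 : 0 ≤ CA := le_trans (norm_nonneg _) (hCA 0 ⟨le_refl 0, ht⟩)
  have hCS0 : 0 ≤ CS := le_trans (norm_nonneg _) (hCS 0 ⟨le_refl 0, ht⟩)
  have hCφ0 : 0 ≤ Cφ := le_trans (norm_nonneg _) (hCφ 0 ⟨le_refl 0, ht⟩)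
  have hCG0 : 0 ≤ CG := le_trans (norm_nonneg _) (hCG 0 ⟨le_refl 0, ht⟩)
  set D : ℝ → Matrix (Fin r) (Fin r) ℝ := fun u => φo u - G u with hD_def
  set K : ℝ := r * CA + r * CA + r * r * CS * Cφ + r * r * CS * CG with hK_def
  have hD' : ∀ u : ℝ, 0 ≤ u → HasDerivAt D
      (A u * D u + D u * (A u)ᵀ - D u * S u * φo u - G u * S u * D u) u := by
    intro u hu
    have h := (hφo u).sub (hG' u hu)
    refine h.congr_deriv ?_
    simp only [hD_def, Matrix.mul_sub, Matrix.sub_mul]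
    abel
  have hDbound : ∀ u ∈ Ico 0 t,
      ‖A u * D u + D u * (A u)ᵀ - D u * S u * φo u - G u * S u * D u‖ ≤ K * ‖D u‖ + 0 := by
    intro u hu
    have hu' : u ∈ Icc 0 t := ⟨hu.1, le_of_lt hu.2⟩
    have b1 : ‖A u * D u‖ ≤ r * CA * ‖D u‖ :=
      le_trans (matNorm_mul_le _ _)
        (mul_le_mul_of_nonneg_right
          (mul_le_mul_of_nonneg_left (hCA u hu') (Nat.cast_nonneg r)) (norm_nonneg _))
    have b2 : ‖D u * (A u)ᵀ‖ ≤ r * CA * ‖D u‖ := by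
      calc ‖D u * (A u)ᵀ‖ ≤ r * ‖D u‖ * ‖(A u)ᵀ‖ := matNorm_mul_le _ _
        _ = r * ‖(A u)ᵀ‖ * ‖D u‖ := by ring
        _ ≤ r * CA * ‖D u‖ := by
            apply mul_le_mul_of_nonneg_right _ (norm_nonneg _)
            apply mul_le_mul_of_nonneg_left _ (Nat.cast_nonneg r)
            rw [matNorm_transpose]
            exact hCA u hu'
    have hSφ : ‖S u‖ * ‖φo u‖ ≤ CS * Cφ :=
      mul_le_mul (hCS u hu') (hCφ u hu') (norm_nonneg _) hCS0
    have b3 : ‖D u * S u * φo u‖ ≤ r * r * CS * Cφ * ‖D u‖ := by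
      calc ‖D u * S u * φo u‖ ≤ r * ‖D u * S u‖ * ‖φo u‖ := matNorm_mul_le _ _
        _ ≤ r * (r * ‖D u‖ * ‖S u‖) * ‖φo u‖ := by
            apply mul_le_mul_of_nonneg_right _ (norm_nonneg _)
            exact mul_le_mul_of_nonneg_left (matNorm_mul_le _ _) (Nat.cast_nonneg r)
        _ = (r * r * ‖D u‖) * (‖S u‖ * ‖φo u‖) := by ring
        _ ≤ (r * r * ‖D u‖) * (CS * Cφ) :=
            mul_le_mul_of_nonneg_left hSφ (by positivity)
        _ = r * r * CS * Cφ * ‖D u‖ := by ring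
    have hGS : ‖G u‖ * ‖S u‖ ≤ CG * CS :=
      mul_le_mul (hCG u hu') (hCS u hu') (norm_nonneg _) hCG0
    have b4 : ‖G u * S u * D u‖ ≤ r * r * CS * CG * ‖D u‖ := by
      calc ‖G u * S u * D u‖ ≤ r * ‖G u * S u‖ * ‖D u‖ := matNorm_mul_le _ _
        _ ≤ r * (r * ‖G u‖ * ‖S u‖) * ‖D u‖ := by
            apply mul_le_mul_of_nonneg_right _ (norm_nonneg _)
            exact mul_le_mul_of_nonneg_left (matNorm_mul_le _ _) (Nat.cast_nonneg r)
        _ = (r * r) * (‖G u‖ * ‖S u‖) * ‖D u‖ := by ring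
        _ ≤ (r * r) * (CG * CS) * ‖D u‖ :=
            mul_le_mul_of_nonneg_right
              (mul_le_mul_of_nonneg_left hGS (by positivity)) (norm_nonneg _)
        _ = r * r * CS * CG * ‖D u‖ := by ring
    have h5 : ‖A u * D u + D u * (A u)ᵀ - D u * S u * φo u - G u * S u * D u‖ ≤
        ‖A u * D u‖ + ‖D u * (A u)ᵀ‖ + ‖D u * S u * φo u‖ + ‖G u * S u * D u‖ := by
      calc ‖A u * D u + D u * (A u)ᵀ - D u * S u * φo u - G u * S u * D u‖
          ≤ ‖A u * D u + D u * (A u)ᵀ - D u * S u * φo u‖ + ‖G u * S u * D u‖ :=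
            norm_sub_le _ _
        _ ≤ ‖A u * D u + D u * (A u)ᵀ‖ + ‖D u * S u * φo u‖ + ‖G u * S u * D u‖ :=
            add_le_add_left (norm_sub_le _ _) _
        _ ≤ ‖A u * D u‖ + ‖D u * (A u)ᵀ‖ + ‖D u * S u * φo u‖ + ‖G u * S u * D u‖ :=
            add_le_add_left (add_le_add_left (norm_add_le _ _) _) _
    have hKexp : K * ‖D u‖ = r * CA * ‖D u‖ + r * CA * ‖D u‖ + r * r * CS * Cφ * ‖D u‖
        + r * r * CS * CG * ‖D u‖ := by rw [hK_def]; ring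
    rw [add_zero, hKexp]
    linarith
  have hDcont : ContinuousOn D (Icc 0 t) := (hφcont.continuousOn).sub hGcont
  have hD0 : ‖D 0‖ ≤ (0:ℝ) := by simp [hD_def, hφo0, hG0]
  have hgron := norm_le_gronwallBound_of_norm_deriv_right_le hDcont
    (fun u hu => (hD' u hu.1).hasDerivWithinAt) hD0 hDbound
  have hDt := hgron t ⟨ht, le_refl t⟩
  rw [gronwallBound_ε0_δ0] at hDt
  have h0 : φo t - G t = 0 := norm_le_zero_iff.mp hDt
  have hform : φo t = G t := sub_eq_zero.mp h0
  refine ⟨hform, ?_⟩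
  intro hObu
  have hEu : IsUnit (E t) := transition_isUnit A hAcont E hE0 hE ht
  have hEd : IsUnit (E t).det := (Matrix.isUnit_iff_isUnit_det _).mp hEu
  have hEtd : IsUnit ((E t)ᵀ).det := by rw [Matrix.det_transpose]; exact hEd
  have hObpd : (∫ s in (0:ℝ)..t, f s).PosDef :=
    posDef_of_posSemidef_isUnit (matIntegral_posSemidef f hfcont hfpsd t ht) hObu
  have hNt : (N t).PosDef := hNpd t ht
  have hdiff : ((N t) - (∫ s in (0:ℝ)..t, f s)).PosSemidef := by
    have hh : N t - (∫ s in (0:ℝ)..t, f s) = Q⁻¹ := by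
      simp [hN_def]
    rw [hh]
    exact hQ.inv.posSemidef
  have hsub := inv_sub_inv_posSemidef hObpd hNt hdiff
  have hO : (((E t)ᵀ)⁻¹ * (∫ s in (0:ℝ)..t, f s) * (E t)⁻¹)⁻¹
      = E t * (∫ s in (0:ℝ)..t, f s)⁻¹ * (E t)ᵀ := by
    rw [Matrix.mul_inv_rev, Matrix.mul_inv_rev, Matrix.nonsing_inv_nonsing_inv _ hEd,
      Matrix.nonsing_inv_nonsing_inv _ hEtd, Matrix.mul_assoc]
  rw [hO, hform]
  have hre : E t * (∫ s in (0:ℝ)..t, f s)⁻¹ * (E t)ᵀ - G t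
      = E t * ((∫ s in (0:ℝ)..t, f s)⁻¹ - (N t)⁻¹) * (E t)ᴴ := by
    rw [Matrix.conjTranspose_eq_transpose_of_trivial, hG_def, Matrix.mul_sub, Matrix.sub_mul]
  rw [hre]
  exact hsub.mul_mul_conjTranspose_same (E t)
end

section
/- Let P be a symmetric positive definite solution of the algebraic Riccati equation A P + P A' − P S P + R1 = 0 with S positive semi-definite and R1 positive definite, and let κ, ν > 0 satisfy ‖exp(t(A−PS))‖₂ ≤ κ e^{−νt} for all t ≥ 0. Then the time-invariant Riccati flow φ_t(Q) with φ_0(Q)=Q > 0 satisfies φ_t(Q) ≤ P + e^{t(A−PS)}(Q−P)e^{t(A−PS)'} for all t ≥ 0, and hence ‖φ_t(Q)‖₂ ≤ ‖P‖₂ + κ² ‖Q−P‖₂ uniformly in t. -/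
open Matrix

attribute [local instance] Matrix.normedAddCommGroup Matrix.normedSpace

namespace RiccatiAux

variable {r : ℕ}

local notation "Mat" => Matrix (Fin r) (Fin r) ℝ

/-! ### Transfer of derivatives between norm structures -/

theorem ofL2 {f : ℝ → Mat} {d : Mat} {u : ℝ}
    (h : @HasDerivAt ℝ _ _ Matrix.instL2OpNormedAddCommGroup.toAddCommGroup
      Matrix.instL2OpNormedSpace.toModule Matrix.instL2OpMetricSpace.toUniformSpace.toTopologicalSpace
      _ f d u) : HasDerivAt f d u := by
  refine hasDerivAt_iff_tendsto_slope.mpr ?_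
  exact (@hasDerivAt_iff_tendsto_slope ℝ _ _ Matrix.instL2OpNormedAddCommGroup
    Matrix.instL2OpNormedSpace f d u).mp h

theorem toL2 {f : ℝ → Mat} {d : Mat} {u : ℝ} (h : HasDerivAt f d u) :
    @HasDerivAt ℝ _ _ Matrix.instL2OpNormedAddCommGroup.toAddCommGroup
      Matrix.instL2OpNormedSpace.toModule Matrix.instL2OpMetricSpace.toUniformSpace.toTopologicalSpace
      _ f d u := by
  rw [@hasDerivAt_iff_tendsto_slope ℝ _ _ Matrix.instL2OpNormedAddCommGroup
    Matrix.instL2OpNormedSpace f d u]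
  exact hasDerivAt_iff_tendsto_slope.mp h

theorem hasDerivAt_matMul {f g : ℝ → Mat} {df dg : Mat} {u : ℝ}
    (hf : HasDerivAt f df u) (hg : HasDerivAt g dg u) :
    HasDerivAt (fun x => f x * g x) (df * g u + f u * dg) u := by
  letI := Matrix.instL2OpMetricSpace (m := Fin r) (n := Fin r) (𝕜 := ℝ)
  letI := Matrix.instL2OpNormedAddCommGroup (m := Fin r) (n := Fin r) (𝕜 := ℝ)
  letI := Matrix.instL2OpNormedSpace (m := Fin r) (n := Fin r) (𝕜 := ℝ)
  letI := Matrix.instL2OpNormedRing (n := Fin r) (𝕜 := ℝ)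
  letI := Matrix.instL2OpNormedAlgebra (n := Fin r) (𝕜 := ℝ)
  exact ofL2 ((toL2 hf).mul (toL2 hg))

theorem hasDerivAt_expMat (M : Mat) (u : ℝ) :
    HasDerivAt (fun t : ℝ => NormedSpace.exp (t • M)) (M * NormedSpace.exp (u • M)) u := by
  letI := Matrix.instL2OpMetricSpace (m := Fin r) (n := Fin r) (𝕜 := ℝ)
  letI := Matrix.instL2OpNormedAddCommGroup (m := Fin r) (n := Fin r) (𝕜 := ℝ)
  letI := Matrix.instL2OpNormedSpace (m := Fin r) (n := Fin r) (𝕜 := ℝ)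
  letI := Matrix.instL2OpNormedRing (n := Fin r) (𝕜 := ℝ)
  letI := Matrix.instL2OpNormedAlgebra (n := Fin r) (𝕜 := ℝ)
  exact ofL2 (hasDerivAt_exp_smul_const' M u)

theorem expMat_mul_expMat_neg (M : Mat) (u : ℝ) :
    NormedSpace.exp (u • M) * NormedSpace.exp (u • (-M)) = 1 := by
  letI := Matrix.instL2OpMetricSpace (m := Fin r) (n := Fin r) (𝕜 := ℝ)
  letI := Matrix.instL2OpNormedAddCommGroup (m := Fin r) (n := Fin r) (𝕜 := ℝ)
  letI := Matrix.instL2OpNormedSpace (m := Fin r) (n := Fin r) (𝕜 := ℝ)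
  letI := Matrix.instL2OpNormedRing (n := Fin r) (𝕜 := ℝ)
  letI := Matrix.instL2OpNormedAlgebra (n := Fin r) (𝕜 := ℝ)
  rw [← Matrix.exp_add_of_commute]
  · simp
  · exact ((Commute.refl M).neg_right.smul_left u).smul_right u

theorem commute_expMat {M X : Mat} (h : M * X = X * M) (u : ℝ) :
    X * NormedSpace.exp (u • M) = NormedSpace.exp (u • M) * X := by
  letI := Matrix.instL2OpMetricSpace (m := Fin r) (n := Fin r) (𝕜 := ℝ)
  letI := Matrix.instL2OpNormedAddCommGroup (m := Fin r) (n := Fin r) (𝕜 := ℝ)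
  letI := Matrix.instL2OpNormedSpace (m := Fin r) (n := Fin r) (𝕜 := ℝ)
  letI := Matrix.instL2OpNormedRing (n := Fin r) (𝕜 := ℝ)
  letI := Matrix.instL2OpNormedAlgebra (n := Fin r) (𝕜 := ℝ)
  have hc : Commute X M := h.symm
  exact (hc.smul_right u).exp_right

noncomputable def transposeCLM : Mat →L[ℝ] Mat :=
  LinearMap.toContinuousLinearMap (Matrix.transposeLinearEquiv (Fin r) (Fin r) ℝ ℝ).toLinearMap

theorem hasDerivAt_transpose {f : ℝ → Mat} {d : Mat} {u : ℝ} (h : HasDerivAt f d u) :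
    HasDerivAt (fun x => (f x)ᵀ) dᵀ u := by
  have := (transposeCLM (r := r)).hasFDerivAt.comp_hasDerivAt u h
  exact this

noncomputable def quadCLM (z : Fin r → ℝ) : Mat →L[ℝ] ℝ :=
  LinearMap.toContinuousLinearMap
    { toFun := fun M : Mat => z ⬝ᵥ M *ᵥ z
      map_add' := by intro M N; simp [Matrix.add_mulVec]
      map_smul' := by intro c M; simp [Matrix.smul_mulVec, dotProduct_smul] }

theorem hasDerivAt_quad {f : ℝ → Mat} {d : Mat} {u : ℝ} (z : Fin r → ℝ)
    (h : HasDerivAt f d u) :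
    HasDerivAt (fun x => z ⬝ᵥ f x *ᵥ z) (z ⬝ᵥ d *ᵥ z) u := by
  have := (quadCLM (r := r) z).hasFDerivAt.comp_hasDerivAt u h
  exact this

/-! ### Spectral norm toolkit -/

theorem dotProduct_self_nonneg (x : Fin r → ℝ) : 0 ≤ x ⬝ᵥ x :=
  Finset.sum_nonneg fun _ _ => mul_self_nonneg _

theorem specNorm_nonneg (A : Mat) : 0 ≤ specNorm A := norm_nonneg _

theorem quad_pert (D : Mat) (x : Fin r → ℝ) :
    |x ⬝ᵥ D *ᵥ x| ≤ (∑ i, ∑ j, |D i j|) * (x ⬝ᵥ x) := by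
  have hxx : ∀ i j, |x i| * |x j| ≤ x ⬝ᵥ x := by
    intro i j
    have hi : x i * x i ≤ x ⬝ᵥ x := Finset.single_le_sum (f := fun k => x k * x k)
      (fun k _ => mul_self_nonneg _) (Finset.mem_univ i)
    have hj : x j * x j ≤ x ⬝ᵥ x := Finset.single_le_sum (f := fun k => x k * x k)
      (fun k _ => mul_self_nonneg _) (Finset.mem_univ j)
    nlinarith [abs_nonneg (x i), abs_nonneg (x j), sq_abs (x i), sq_abs (x j),
      abs_mul_abs_self (x i), abs_mul_abs_self (x j)]
  calc |x ⬝ᵥ D *ᵥ x| = |∑ i, x i * ∑ j, D i j * x j| := rfl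
    _ ≤ ∑ i, |x i * ∑ j, D i j * x j| := Finset.abs_sum_le_sum_abs _ _
    _ ≤ ∑ i, ∑ j, |D i j| * (x ⬝ᵥ x) := by
        apply Finset.sum_le_sum
        intro i _
        rw [abs_mul]
        calc |x i| * |∑ j, D i j * x j| ≤ |x i| * ∑ j, |D i j * x j| :=
              mul_le_mul_of_nonneg_left (Finset.abs_sum_le_sum_abs _ _) (abs_nonneg _)
          _ = ∑ j, |x i| * (|D i j| * |x j|) := by
              rw [Finset.mul_sum]
              refine Finset.sum_congr rfl fun j _ => ?_
              rw [abs_mul]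
          _ ≤ ∑ j, |D i j| * (x ⬝ᵥ x) := by
              apply Finset.sum_le_sum
              intro j _
              have := hxx i j
              nlinarith [abs_nonneg (D i j), abs_nonneg (x i), abs_nonneg (x j)]
    _ = (∑ i, ∑ j, |D i j|) * (x ⬝ᵥ x) := by
        rw [Finset.sum_mul]
        refine Finset.sum_congr rfl fun i _ => ?_
        rw [Finset.sum_mul]

theorem euclid_inner (x y : Fin r → ℝ) :
    @inner ℝ _ _ ((WithLp.equiv 2 _).symm x : EuclideanSpace ℝ (Fin r))
      ((WithLp.equiv 2 _).symm y) = x ⬝ᵥ y := by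
  rw [EuclideanSpace.inner_eq_star_dotProduct]
  simp [dotProduct, mul_comm]

theorem euclid_norm_sq (x : Fin r → ℝ) :
    ‖((WithLp.equiv 2 _).symm x : EuclideanSpace ℝ (Fin r))‖ ^ 2 = x ⬝ᵥ x := by
  rw [← real_inner_self_eq_norm_sq, euclid_inner]

theorem specNorm_transpose (A : Mat) : specNorm Aᵀ = specNorm A := by
  letI := Matrix.instL2OpMetricSpace (m := Fin r) (n := Fin r) (𝕜 := ℝ)
  letI := Matrix.instL2OpNormedAddCommGroup (m := Fin r) (n := Fin r) (𝕜 := ℝ)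
  have h := Matrix.l2_opNorm_conjTranspose (𝕜 := ℝ) A
  rw [Matrix.conjTranspose_eq_transpose_of_trivial] at h
  exact h

theorem norm_mulVec_le (A : Mat) (x : Fin r → ℝ) :
    ‖((WithLp.equiv 2 _).symm (A *ᵥ x) : EuclideanSpace ℝ (Fin r))‖ ≤
      specNorm A * ‖((WithLp.equiv 2 _).symm x : EuclideanSpace ℝ (Fin r))‖ := by
  have h := (LinearMap.toContinuousLinearMap (Matrix.toEuclideanLin A)).le_opNorm
    ((WithLp.equiv 2 _).symm x : EuclideanSpace ℝ (Fin r))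
  have e : (LinearMap.toContinuousLinearMap (Matrix.toEuclideanLin A))
      ((WithLp.equiv 2 _).symm x : EuclideanSpace ℝ (Fin r)) =
      ((WithLp.equiv 2 _).symm (A *ᵥ x) : EuclideanSpace ℝ (Fin r)) := by
    simp [Matrix.toEuclideanLin_apply]
  rw [e] at h
  exact h

theorem mulVec_dot_self_le (A : Mat) (x : Fin r → ℝ) :
    (A *ᵥ x) ⬝ᵥ (A *ᵥ x) ≤ specNorm A ^ 2 * (x ⬝ᵥ x) := by
  rw [← euclid_norm_sq, ← euclid_norm_sq]
  calc ‖((WithLp.equiv 2 _).symm (A *ᵥ x) : EuclideanSpace ℝ (Fin r))‖ ^ 2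
      ≤ (specNorm A * ‖((WithLp.equiv 2 _).symm x : EuclideanSpace ℝ (Fin r))‖) ^ 2 := by
        apply pow_le_pow_left₀ (norm_nonneg _) (norm_mulVec_le A x)
    _ = specNorm A ^ 2 * ‖((WithLp.equiv 2 _).symm x : EuclideanSpace ℝ (Fin r))‖ ^ 2 := by ring

theorem quad_abs_le (A : Mat) (x : Fin r → ℝ) :
    |x ⬝ᵥ A *ᵥ x| ≤ specNorm A * (x ⬝ᵥ x) := by
  have h1 : x ⬝ᵥ A *ᵥ x = @inner ℝ _ _
      ((WithLp.equiv 2 _).symm x : EuclideanSpace ℝ (Fin r))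
      ((WithLp.equiv 2 _).symm (A *ᵥ x)) := (euclid_inner _ _).symm
  rw [h1]
  calc |@inner ℝ _ _ ((WithLp.equiv 2 _).symm x : EuclideanSpace ℝ (Fin r))
        ((WithLp.equiv 2 _).symm (A *ᵥ x))|
      ≤ ‖((WithLp.equiv 2 _).symm x : EuclideanSpace ℝ (Fin r))‖ *
        ‖((WithLp.equiv 2 _).symm (A *ᵥ x) : EuclideanSpace ℝ (Fin r))‖ :=
        abs_real_inner_le_norm _ _
    _ ≤ ‖((WithLp.equiv 2 _).symm x : EuclideanSpace ℝ (Fin r))‖ *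
        (specNorm A * ‖((WithLp.equiv 2 _).symm x : EuclideanSpace ℝ (Fin r))‖) :=
        mul_le_mul_of_nonneg_left (norm_mulVec_le A x) (norm_nonneg _)
    _ = specNorm A * ‖((WithLp.equiv 2 _).symm x : EuclideanSpace ℝ (Fin r))‖ ^ 2 := by ring
    _ = specNorm A * (x ⬝ᵥ x) := by rw [euclid_norm_sq]

theorem specNorm_le_of_quad (M : Mat) (hsym : Mᵀ = M) (C : ℝ) (hC : 0 ≤ C)
    (hpsd : ∀ x, 0 ≤ x ⬝ᵥ M *ᵥ x) (h : ∀ x, x ⬝ᵥ M *ᵥ x ≤ C * (x ⬝ᵥ x)) :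
    specNorm M ≤ C := by
  have key : ∀ x : Fin r → ℝ, (M *ᵥ x) ⬝ᵥ (M *ᵥ x) ≤ C ^ 2 * (x ⬝ᵥ x) := by
    intro x
    set v := M *ᵥ x with hv
    have hBsym : ∀ u w : Fin r → ℝ, u ⬝ᵥ M *ᵥ w = w ⬝ᵥ M *ᵥ u := by
      intro u w
      conv_lhs => rw [← hsym]
      rw [Matrix.dotProduct_mulVec, Matrix.vecMul_transpose, dotProduct_comm]
    have hquad : ∀ s : ℝ, 0 ≤ (v ⬝ᵥ M *ᵥ v) * (s * s) + (2 * (x ⬝ᵥ M *ᵥ v)) * s + x ⬝ᵥ M *ᵥ x := by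
      intro s
      have h0 := hpsd (x + s • v)
      have e : (x + s • v) ⬝ᵥ M *ᵥ (x + s • v) =
          (v ⬝ᵥ M *ᵥ v) * (s * s) + (2 * (x ⬝ᵥ M *ᵥ v)) * s + x ⬝ᵥ M *ᵥ x := by
        simp only [Matrix.mulVec_add, Matrix.mulVec_smul, dotProduct_add, add_dotProduct,
          dotProduct_smul, smul_dotProduct, smul_eq_mul]
        rw [hBsym v x]
        ring
      rw [e] at h0
      exact h0
    have hdisc := discrim_le_zero hquad
    rw [discrim] at hdisc
    have hCS : (x ⬝ᵥ M *ᵥ v) ^ 2 ≤ (v ⬝ᵥ M *ᵥ v) * (x ⬝ᵥ M *ᵥ x) := by nlinarith [hdisc]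
    have hxv : x ⬝ᵥ M *ᵥ v = v ⬝ᵥ v := by
      rw [hBsym x v, Matrix.dotProduct_mulVec, ← hsym, Matrix.vecMul_transpose, hv]
    have h1 : (v ⬝ᵥ v) ^ 2 ≤ (C * (v ⬝ᵥ v)) * (C * (x ⬝ᵥ x)) := by
      calc (v ⬝ᵥ v) ^ 2 ≤ (v ⬝ᵥ M *ᵥ v) * (x ⬝ᵥ M *ᵥ x) := by rw [← hxv]; exact hCS
        _ ≤ (C * (v ⬝ᵥ v)) * (x ⬝ᵥ M *ᵥ x) := mul_le_mul_of_nonneg_right (h v) (hpsd x)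
        _ ≤ (C * (v ⬝ᵥ v)) * (C * (x ⬝ᵥ x)) := by
            apply mul_le_mul_of_nonneg_left (h x)
            exact mul_nonneg hC (dotProduct_self_nonneg v)
    rcases eq_or_lt_of_le (dotProduct_self_nonneg v) with hz | hz
    · rw [← hz]; exact mul_nonneg (sq_nonneg C) (dotProduct_self_nonneg x)
    · nlinarith [hz, dotProduct_self_nonneg x]
  apply ContinuousLinearMap.opNorm_le_bound _ hC
  intro y
  set x : Fin r → ℝ := WithLp.equiv 2 _ y with hx
  have hy : ((WithLp.equiv 2 _).symm x : EuclideanSpace ℝ (Fin r)) = y := by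
    simp [hx]
  have happ : (LinearMap.toContinuousLinearMap (Matrix.toEuclideanLin M)) y =
      ((WithLp.equiv 2 _).symm (M *ᵥ x) : EuclideanSpace ℝ (Fin r)) := by
    rw [← hy]; simp [Matrix.toEuclideanLin_apply]
  rw [happ, ← hy]
  have h2 : ‖((WithLp.equiv 2 _).symm (M *ᵥ x) : EuclideanSpace ℝ (Fin r))‖ ^ 2 ≤
      (C * ‖((WithLp.equiv 2 _).symm x : EuclideanSpace ℝ (Fin r))‖) ^ 2 := by
    rw [euclid_norm_sq]
    calc (M *ᵥ x) ⬝ᵥ (M *ᵥ x) ≤ C ^ 2 * (x ⬝ᵥ x) := key x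
      _ = (C * ‖((WithLp.equiv 2 _).symm x : EuclideanSpace ℝ (Fin r))‖) ^ 2 := by
          rw [mul_pow, euclid_norm_sq]
  have ha := Real.sqrt_le_sqrt h2
  rwa [Real.sqrt_sq (norm_nonneg _), Real.sqrt_sq (by positivity)] at ha

/-- Symmetry of the Riccati flow. -/
theorem phi_symm (A S R1 : Mat) (hS : Sᵀ = S) (hR1 : R1ᵀ = R1)
    (φ : ℝ → Mat) (hφ0 : (φ 0)ᵀ = φ 0)
    (hφ : ∀ t : ℝ, HasDerivAt φ (A * φ t + φ t * Aᵀ - φ t * S * φ t + R1) t) :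
    ∀ u : ℝ, 0 ≤ u → (φ u)ᵀ = φ u := by
  intro T hT
  letI := Matrix.instL2OpMetricSpace (m := Fin r) (n := Fin r) (𝕜 := ℝ)
  letI := Matrix.instL2OpNormedAddCommGroup (m := Fin r) (n := Fin r) (𝕜 := ℝ)
  letI := Matrix.instL2OpNormedSpace (m := Fin r) (n := Fin r) (𝕜 := ℝ)
  letI := Matrix.instL2OpNormedRing (n := Fin r) (𝕜 := ℝ)
  letI := Matrix.instL2OpNormedAlgebra (n := Fin r) (𝕜 := ℝ)
  set g : ℝ → Mat := fun u => φ u - (φ u)ᵀ with hg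
  set g' : ℝ → Mat := fun u =>
    A * g u + g u * Aᵀ - φ u * S * g u - g u * (S * (φ u)ᵀ) with hg'
  have hgd : ∀ u : ℝ, HasDerivAt g (g' u) u := by
    intro u
    have h1 := toL2 (hφ u)
    have h2 := toL2 (hasDerivAt_transpose (hφ u))
    have h3 := h1.sub h2
    refine (ofL2 h3).congr_deriv ?_
    simp only [hg', hg, transpose_add, transpose_sub, transpose_mul, transpose_transpose,
      hS, hR1]
    noncomm_ring
  have hφcont : Continuous φ := continuous_iff_continuousAt.mpr fun u => (toL2 (hφ u)).continuousAt
  have hgc : Continuous g := continuous_iff_continuousAt.mpr fun u => (hgd u).continuousAt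
  have hcoeff : Continuous fun u : ℝ => ‖A‖ + ‖Aᵀ‖ + ‖φ u * S‖ + ‖S * (φ u)ᵀ‖ := by
    refine ((continuous_const.add continuous_const).add
      ((continuous_norm.comp (hφcont.matrix_mul continuous_const)))).add
      (continuous_norm.comp (continuous_const.matrix_mul hφcont.matrix_transpose))
  obtain ⟨K, hK⟩ := (isCompact_Icc (a := (0:ℝ)) (b := T)).exists_bound_of_continuousOn
    hcoeff.continuousOn
  have hbound : ∀ x ∈ Set.Ico (0:ℝ) T, ‖g' x‖ ≤ K * ‖g x‖ + 0 := by
    intro x hx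
    have h1 : ‖g' x‖ ≤ (‖A‖ + ‖Aᵀ‖ + ‖φ x * S‖ + ‖S * (φ x)ᵀ‖) * ‖g x‖ := by
      have e1 : ‖A * g x‖ ≤ ‖A‖ * ‖g x‖ := norm_mul_le _ _
      have e2 : ‖g x * Aᵀ‖ ≤ ‖g x‖ * ‖Aᵀ‖ := norm_mul_le _ _
      have e3 : ‖φ x * S * g x‖ ≤ ‖φ x * S‖ * ‖g x‖ := norm_mul_le _ _
      have e4 : ‖g x * (S * (φ x)ᵀ)‖ ≤ ‖g x‖ * ‖S * (φ x)ᵀ‖ := norm_mul_le _ _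
      have t1 : ‖g' x‖ ≤ ‖A * g x‖ + ‖g x * Aᵀ‖ + ‖φ x * S * g x‖ + ‖g x * (S * (φ x)ᵀ)‖ := by
        rw [hg']
        refine (norm_sub_le _ _).trans ?_
        have := (norm_sub_le (A * g x + g x * Aᵀ) (φ x * S * g x))
        have h0 := norm_add_le (A * g x) (g x * Aᵀ)
        nlinarith [this]
      nlinarith [t1, e1, e2, e3, e4, norm_nonneg (g x)]
    have h2 : ‖A‖ + ‖Aᵀ‖ + ‖φ x * S‖ + ‖S * (φ x)ᵀ‖ ≤ K := by
      have := hK x ⟨hx.1, hx.2.le⟩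
      exact le_trans (le_abs_self _) this
    have := mul_le_mul_of_nonneg_right h2 (norm_nonneg (g x))
    linarith [h1, this]
  have hmain := norm_le_gronwallBound_of_norm_deriv_right_le (δ := 0) (K := K) (ε := 0)
    hgc.continuousOn (fun x _ => (hgd x).hasDerivWithinAt) (by simp [hg, hφ0]) hbound
  have hT' := hmain T ⟨hT, le_refl T⟩
  rw [gronwallBound_ε0] at hT'
  simp only [zero_mul] at hT'
  have : g T = 0 := by
    have := le_antisymm hT' (norm_nonneg _)
    exact norm_eq_zero.mp this
  have : φ T - (φ T)ᵀ = 0 := this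
  have := sub_eq_zero.mp this
  exact this.symm

theorem quad_continuous (M : Mat) : Continuous fun x : Fin r → ℝ => x ⬝ᵥ M *ᵥ x := by
  show Continuous fun x : Fin r → ℝ => ∑ i, x i * ∑ j, M i j * x j
  refine continuous_finset_sum _ fun i _ => (continuous_apply i).mul ?_
  exact continuous_finset_sum _ fun j _ => continuous_const.mul (continuous_apply j)

theorem dot_self_continuous : Continuous fun x : Fin r → ℝ => x ⬝ᵥ x := by
  show Continuous fun x : Fin r → ℝ => ∑ i, x i * x i
  exact continuous_finset_sum _ fun i _ => (continuous_apply i).mul (continuous_apply i)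

theorem exists_eps (M : Mat) (hstrict : ∀ x : Fin r → ℝ, x ≠ 0 → 0 < x ⬝ᵥ M *ᵥ x) :
    ∃ ε : ℝ, 0 < ε ∧ ∀ x, ε * (x ⬝ᵥ x) ≤ x ⬝ᵥ M *ᵥ x := by
  classical
  set S1 : Set (Fin r → ℝ) := {x | x ⬝ᵥ x = 1} with hS1def
  have hnormalize : ∀ x : Fin r → ℝ, x ≠ 0 →
      0 < Real.sqrt (x ⬝ᵥ x) ∧ (Real.sqrt (x ⬝ᵥ x))⁻¹ • x ∈ S1 := by
    intro x hx
    have hxx : 0 < x ⬝ᵥ x :=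
      lt_of_le_of_ne (dotProduct_self_nonneg x)
        (fun h => hx (dotProduct_self_eq_zero.mp h.symm))
    have hc : 0 < Real.sqrt (x ⬝ᵥ x) := Real.sqrt_pos.mpr hxx
    refine ⟨hc, ?_⟩
    show ((Real.sqrt (x ⬝ᵥ x))⁻¹ • x) ⬝ᵥ ((Real.sqrt (x ⬝ᵥ x))⁻¹ • x) = 1
    rw [smul_dotProduct, dotProduct_smul, smul_eq_mul, smul_eq_mul]
    have hss : Real.sqrt (x ⬝ᵥ x) * Real.sqrt (x ⬝ᵥ x) = x ⬝ᵥ x := Real.mul_self_sqrt hxx.le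
    field_simp
    rw [Real.sq_sqrt hxx.le]
  by_cases hS1 : S1.Nonempty
  · have hclosed : IsClosed S1 := isClosed_eq dot_self_continuous continuous_const
    have hbdd : S1 ⊆ Metric.closedBall 0 1 := by
      intro x hx
      rw [Metric.mem_closedBall, dist_zero_right]
      refine (pi_norm_le_iff_of_nonneg zero_le_one).mpr fun i => ?_
      rw [Real.norm_eq_abs, abs_le]
      have hsq : x i * x i ≤ 1 := by
        have h1 : x i * x i ≤ x ⬝ᵥ x :=
          Finset.single_le_sum (f := fun j => x j * x j)
            (fun j _ => mul_self_nonneg _) (Finset.mem_univ i)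
        have hx1 : x ⬝ᵥ x = 1 := hx
        linarith
      constructor <;> nlinarith
    have hcpt : IsCompact S1 :=
      (isCompact_closedBall (0 : Fin r → ℝ) 1).of_isClosed_subset hclosed hbdd
    obtain ⟨x₀, hx₀S, hx₀min⟩ := hcpt.exists_isMinOn hS1 (quad_continuous M).continuousOn
    have hx₀ne : x₀ ≠ 0 := by
      intro h
      have hx1 : x₀ ⬝ᵥ x₀ = 1 := hx₀S
      rw [h] at hx1
      simp [dotProduct] at hx1
    refine ⟨x₀ ⬝ᵥ M *ᵥ x₀, hstrict x₀ hx₀ne, ?_⟩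
    intro x
    by_cases hx : x = 0
    · subst hx; simp
    · obtain ⟨hc, hymem⟩ := hnormalize x hx
      set c := Real.sqrt (x ⬝ᵥ x) with hcdef
      set y := c⁻¹ • x with hydef
      have hmin := (isMinOn_iff.mp hx₀min) y hymem
      have hqy : y ⬝ᵥ M *ᵥ y = (c⁻¹ * c⁻¹) * (x ⬝ᵥ M *ᵥ x) := by
        rw [hydef, smul_dotProduct, Matrix.mulVec_smul, dotProduct_smul]
        simp [smul_eq_mul]; ring
      have hss : c * c = x ⬝ᵥ x := Real.mul_self_sqrt
        (dotProduct_self_nonneg x)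
      rw [hqy] at hmin
      have hcne : c ≠ 0 := ne_of_gt hc
      rw [← hss]
      have h1 := mul_le_mul_of_nonneg_right hmin (mul_nonneg hc.le hc.le)
      calc (x₀ ⬝ᵥ M *ᵥ x₀) * (c * c) ≤ (c⁻¹ * c⁻¹ * (x ⬝ᵥ M *ᵥ x)) * (c * c) := h1
        _ = (x ⬝ᵥ M *ᵥ x) * ((c⁻¹ * c) * (c⁻¹ * c)) := by ring
        _ = x ⬝ᵥ M *ᵥ x := by rw [inv_mul_cancel₀ hcne]; ring
  · refine ⟨1, one_pos, fun x => ?_⟩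
    by_cases hx : x = 0
    · subst hx; simp
    · exact absurd ⟨_, (hnormalize x hx).2⟩ hS1


/-- Positivity of the Riccati flow. -/
theorem phi_psd (A S R1 Q : Mat) (hR1 : R1.PosDef) (hQ : Q.PosDef)
    (φ : ℝ → Mat) (hφ0 : φ 0 = Q)
    (hφ : ∀ t : ℝ, HasDerivAt φ (A * φ t + φ t * Aᵀ - φ t * S * φ t + R1) t)
    (hsym : ∀ u : ℝ, 0 ≤ u → (φ u)ᵀ = φ u) :
    ∀ t : ℝ, 0 ≤ t → ∀ x : Fin r → ℝ, 0 ≤ x ⬝ᵥ φ t *ᵥ x := by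
  intro t ht
  by_contra hcon
  push_neg at hcon
  obtain ⟨x₁, hx₁⟩ := hcon
  set Z : Set ℝ := {u | u ∈ Set.Icc 0 t ∧ ∃ x : Fin r → ℝ, x ⬝ᵥ φ u *ᵥ x < 0} with hZ
  have hZne : Z.Nonempty := ⟨t, ⟨⟨ht, le_refl t⟩, ⟨x₁, hx₁⟩⟩⟩
  have hZbdd : BddBelow Z := ⟨0, fun z hz => hz.1.1⟩
  set c := sInf Z with hc
  have hc0 : 0 ≤ c := le_csInf hZne fun z hz => hz.1.1
  have hct : c ≤ t := csInf_le hZbdd ⟨⟨ht, le_refl t⟩, ⟨x₁, hx₁⟩⟩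
  have hFcont : ∀ x : Fin r → ℝ, Continuous fun u => x ⬝ᵥ φ u *ᵥ x := fun x =>
    continuous_iff_continuousAt.mpr fun u => (hasDerivAt_quad x (hφ u)).continuousAt
  have hlt : ∀ u : ℝ, 0 ≤ u → u < c → ∀ x : Fin r → ℝ, 0 ≤ x ⬝ᵥ φ u *ᵥ x := by
    intro u hu huc x
    by_contra h
    push_neg at h
    have hmem : u ∈ Z := ⟨⟨hu, le_trans huc.le hct⟩, ⟨x, h⟩⟩
    exact absurd (csInf_le hZbdd hmem) (not_le.mpr huc)
  have hpsd_c : ∀ x : Fin r → ℝ, 0 ≤ x ⬝ᵥ φ c *ᵥ x := by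
    intro x
    rcases eq_or_lt_of_le hc0 with h0 | hpos
    · rw [← h0, hφ0]
      simpa using hQ.posSemidef.dotProduct_mulVec_nonneg x
    · have htend : Filter.Tendsto (fun u => x ⬝ᵥ φ u *ᵥ x)
        (nhdsWithin c (Set.Iio c)) (nhds (x ⬝ᵥ φ c *ᵥ x)) :=
        ((hFcont x).tendsto c).mono_left nhdsWithin_le_nhds
      refine ge_of_tendsto htend ?_
      filter_upwards [Ioo_mem_nhdsLT_of_mem (Set.mem_Ioc.mpr ⟨hpos, le_refl c⟩)] with u hu
      exact hlt u hu.1.le hu.2 x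
  have hstrict : ∀ x : Fin r → ℝ, x ≠ 0 → 0 < x ⬝ᵥ φ c *ᵥ x := by
    intro x hxne
    rcases lt_or_eq_of_le (hpsd_c x) with h | heq
    · exact h
    exfalso
    have hsymc : (φ c)ᵀ = φ c := hsym c hc0
    have hherm : (φ c).IsHermitian := by
      show (φ c)ᴴ = φ c
      rw [Matrix.conjTranspose_eq_transpose_of_trivial, hsymc]
    have hPSD : (φ c).PosSemidef := .of_dotProduct_mulVec_nonneg hherm fun y => by simpa using hpsd_c y
    have hmv : φ c *ᵥ x = 0 := by
      refine (hPSD.dotProduct_mulVec_zero_iff x).mp ?_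
      simpa using heq.symm
    have hcpos : 0 < c := by
      rcases eq_or_lt_of_le hc0 with h0 | h
      · exfalso
        have heq' := heq
        rw [← h0, hφ0] at heq'
        exact absurd heq' (ne_of_lt (by simpa using hQ.dotProduct_mulVec_pos hxne))
      · exact h
    have hd := hasDerivAt_quad x (hφ c)
    have hvm : x ᵥ* φ c = 0 := by rw [← hsymc, Matrix.vecMul_transpose, hmv]
    have hval : x ⬝ᵥ (A * φ c + φ c * Aᵀ - φ c * S * φ c + R1) *ᵥ x = x ⬝ᵥ R1 *ᵥ x := by
      have e1 : x ⬝ᵥ (A * φ c) *ᵥ x = 0 := by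
        rw [← Matrix.mulVec_mulVec, hmv, Matrix.mulVec_zero, dotProduct_zero]
      have e2 : x ⬝ᵥ (φ c * Aᵀ) *ᵥ x = 0 := by
        rw [Matrix.dotProduct_mulVec, ← Matrix.vecMul_vecMul, hvm, Matrix.zero_vecMul,
          zero_dotProduct]
      have e3 : x ⬝ᵥ (φ c * S * φ c) *ᵥ x = 0 := by
        rw [← Matrix.mulVec_mulVec, hmv, Matrix.mulVec_zero, dotProduct_zero]
      rw [Matrix.add_mulVec, Matrix.sub_mulVec, Matrix.add_mulVec]
      rw [dotProduct_add, dotProduct_sub, dotProduct_add]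
      rw [e1, e2, e3]
      ring
    rw [hval] at hd
    have hdpos : 0 < x ⬝ᵥ R1 *ᵥ x := by simpa using hR1.dotProduct_mulVec_pos hxne
    rw [hasDerivAt_iff_tendsto_slope] at hd
    have hsub : Set.Iio c ⊆ {c}ᶜ := fun y hy => ne_of_lt hy
    have hev1 : ∀ᶠ u in nhdsWithin c (Set.Iio c),
        0 < slope (fun u => x ⬝ᵥ φ u *ᵥ x) c u :=
      (hd.mono_left (nhdsWithin_mono c hsub)).eventually_const_lt hdpos
    have hev2 : ∀ᶠ u in nhdsWithin c (Set.Iio c), u ∈ Set.Ioo 0 c :=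
      Ioo_mem_nhdsLT_of_mem (Set.mem_Ioc.mpr ⟨hcpos, le_refl c⟩)
    obtain ⟨u, hu1, hu2⟩ := (hev1.and hev2).exists
    rw [slope_def_field, ← heq, sub_zero] at hu1
    have huc : u - c < 0 := sub_neg.mpr hu2.2
    have hFu : x ⬝ᵥ φ u *ᵥ x < 0 := by
      by_contra hge
      push_neg at hge
      have : x ⬝ᵥ φ u *ᵥ x / (u - c) ≤ 0 := div_nonpos_of_nonneg_of_nonpos hge huc.le
      linarith
    exact absurd (hlt u hu2.1.le hu2.2 x) (not_le.mpr hFu)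
  obtain ⟨ε, hε, hεq⟩ := exists_eps (φ c) hstrict
  have hφcont : Continuous φ :=
    continuous_iff_continuousAt.mpr fun u => (hφ u).continuousAt
  set g : ℝ → ℝ := fun u => ∑ i, ∑ j, |φ u i j - φ c i j| with hgdef
  have hgcont : Continuous g := by
    refine continuous_finset_sum _ fun i _ => continuous_finset_sum _ fun j _ => ?_
    exact (((continuous_apply j).comp ((continuous_apply i).comp hφcont)).sub
      continuous_const).abs
  have hg0 : g c = 0 := by simp [hgdef]
  have hcont : Filter.Tendsto g (nhds c) (nhds 0) := by
    have := hgcont.tendsto c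
    rwa [hg0] at this
  have hev : ∀ᶠ u in nhds c, g u < ε := hcont.eventually_lt_const hε
  rw [Metric.eventually_nhds_iff] at hev
  obtain ⟨δ, hδ, hball⟩ := hev
  obtain ⟨z, hzZ, hzlt⟩ := exists_lt_of_csInf_lt hZne (by linarith : sInf Z < c + δ)
  have hzc : c ≤ z := csInf_le hZbdd hzZ
  have hznear : dist z c < δ := by
    rw [Real.dist_eq, abs_lt]
    constructor <;> linarith
  have hzpsd : ∀ x : Fin r → ℝ, 0 ≤ x ⬝ᵥ φ z *ᵥ x := by
    intro x
    have hpert := quad_pert (φ z - φ c) x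
    have hgz : (∑ i, ∑ j, |(φ z - φ c) i j|) = g z := by
      simp [hgdef, Matrix.sub_apply]
    rw [hgz] at hpert
    have hsmall := hball hznear
    have he : x ⬝ᵥ φ z *ᵥ x = x ⬝ᵥ φ c *ᵥ x + x ⬝ᵥ (φ z - φ c) *ᵥ x := by
      rw [Matrix.sub_mulVec, dotProduct_sub]; ring
    have h1 := hεq x
    have hdot := dotProduct_self_nonneg x
    have habs := abs_le.mp hpert
    nlinarith [mul_le_mul_of_nonneg_right hsmall.le hdot]
  obtain ⟨xz, hxz⟩ := hzZ.2
  exact absurd (hzpsd xz) (not_le.mpr hxz)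

/-- The fundamental comparison: `φ_t − P ≤ E_t (Q−P) E_tᵀ` at the level of quadratic forms. -/
theorem key_ineq (A S R1 P Q : Mat)
    (hSsym : Sᵀ = S) (hSpsd : ∀ x : Fin r → ℝ, 0 ≤ x ⬝ᵥ S *ᵥ x) (hPsym : Pᵀ = P)
    (hare : A * P + P * Aᵀ - P * S * P + R1 = 0)
    (φ : ℝ → Mat)
    (hφ : ∀ t : ℝ, HasDerivAt φ (A * φ t + φ t * Aᵀ - φ t * S * φ t + R1) t)
    (hφ0 : φ 0 = Q)
    (hsymφ : ∀ u : ℝ, 0 ≤ u → (φ u)ᵀ = φ u)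
    (E Em : ℝ → Mat)
    (hEmd : ∀ u : ℝ, HasDerivAt Em (-((A - P * S) * Em u)) u)
    (hEm0 : Em 0 = 1)
    (hcomm : ∀ u : ℝ, (A - P * S) * Em u = Em u * (A - P * S))
    (hEEm : ∀ u : ℝ, E u * Em u = 1) :
    ∀ t : ℝ, 0 ≤ t → ∀ x : Fin r → ℝ,
      x ⬝ᵥ φ t *ᵥ x ≤ x ⬝ᵥ P *ᵥ x + (x ᵥ* E t) ⬝ᵥ (Q - P) *ᵥ (x ᵥ* E t) := by
  intro t ht x
  have hLT : (A - P * S)ᵀ = Aᵀ - S * P := by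
    rw [transpose_sub, transpose_mul, hSsym, hPsym]
  have hR1eq : R1 = -(A * P + P * Aᵀ - P * S * P) := eq_neg_of_add_eq_zero_right hare
  have hφ' : ∀ u : ℝ, A * φ u + φ u * Aᵀ - φ u * S * φ u + R1
      = (A - P * S) * (φ u - P) + (φ u - P) * (A - P * S)ᵀ
        - (φ u - P) * S * (φ u - P) := by
    intro u
    rw [hR1eq, hLT]
    noncomm_ring
  have hNd : ∀ u : ℝ, HasDerivAt (fun v => Em v * (φ v - P) * (Em v)ᵀ)
      (-(Em u * ((φ u - P) * S * (φ u - P)) * (Em u)ᵀ)) u := by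
    intro u
    have h1 := (hφ u).sub_const P
    have h3 := hasDerivAt_transpose (hEmd u)
    have h4 := hasDerivAt_matMul (hasDerivAt_matMul (hEmd u) h1) h3
    convert h4 using 1
    rw [hφ' u, transpose_neg, transpose_mul]
    have hc := hcomm u
    have hcT : (Em u)ᵀ * (A - P * S)ᵀ = (A - P * S)ᵀ * (Em u)ᵀ := by
      rw [← transpose_mul, ← transpose_mul, hc]
    calc -(Em u * ((φ u - P) * S * (φ u - P)) * (Em u)ᵀ)
        = Em u * ((φ u - P) * ((A - P * S)ᵀ * (Em u)ᵀ))
          - Em u * ((φ u - P) * ((Em u)ᵀ * (A - P * S)ᵀ))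
          - Em u * ((φ u - P) * (S * ((φ u - P) * (Em u)ᵀ)))
          + (Em u * (A - P * S) - (A - P * S) * Em u) * ((φ u - P) * (Em u)ᵀ) := by
          rw [← hcT, hc]
          noncomm_ring
      _ = (-((A - P * S) * Em u) * (φ u - P)
            + Em u * ((A - P * S) * (φ u - P) + (φ u - P) * (A - P * S)ᵀ
              - (φ u - P) * S * (φ u - P))) * (Em u)ᵀ
            + Em u * (φ u - P) * -((Em u)ᵀ * (A - P * S)ᵀ) := by
          noncomm_ring
  set z : Fin r → ℝ := x ᵥ* E t with hz
  set F : ℝ → ℝ := fun u => z ⬝ᵥ (Em u * (φ u - P) * (Em u)ᵀ) *ᵥ z with hF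
  have hFd : ∀ u : ℝ, HasDerivAt F
      (z ⬝ᵥ (-(Em u * ((φ u - P) * S * (φ u - P)) * (Em u)ᵀ)) *ᵥ z) u :=
    fun u => hasDerivAt_quad z (hNd u)
  have hFanti : AntitoneOn F (Set.Icc 0 t) := by
    apply antitoneOn_of_deriv_nonpos (convex_Icc 0 t)
    · exact (continuous_iff_continuousAt.mpr fun u => (hFd u).continuousAt).continuousOn
    · intro u _
      exact (hFd u).differentiableAt.differentiableWithinAt
    · intro u hu
      rw [interior_Icc] at hu
      rw [(hFd u).deriv]
      have hsymu : (φ u - P)ᵀ = φ u - P := by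
        rw [transpose_sub, hPsym, hsymφ u hu.1.le]
      set w : Fin r → ℝ := z ᵥ* Em u with hw
      have hval : z ⬝ᵥ (Em u * ((φ u - P) * S * (φ u - P)) * (Em u)ᵀ) *ᵥ z
          = ((φ u - P) *ᵥ w) ⬝ᵥ S *ᵥ ((φ u - P) *ᵥ w) := by
        rw [← Matrix.mulVec_mulVec, ← Matrix.mulVec_mulVec, Matrix.dotProduct_mulVec,
          Matrix.mulVec_transpose, ← hw]
        rw [← Matrix.mulVec_mulVec, Matrix.dotProduct_mulVec]
        have hwd : w ᵥ* (φ u - P) = (φ u - P) *ᵥ w := by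
          conv_lhs => rw [← hsymu]
          rw [Matrix.vecMul_transpose]
        rw [← Matrix.vecMul_vecMul, hwd, ← Matrix.dotProduct_mulVec]
      rw [Matrix.neg_mulVec, dotProduct_neg, hval]
      simpa using hSpsd ((φ u - P) *ᵥ w)
  have hft : F t ≤ F 0 :=
    hFanti (Set.left_mem_Icc.mpr ht) (Set.right_mem_Icc.mpr ht) ht
  have hF0 : F 0 = z ⬝ᵥ (Q - P) *ᵥ z := by
    rw [hF]
    simp [hEm0, hφ0]
  have hFt : F t = x ⬝ᵥ (φ t - P) *ᵥ x := by
    have hwt : z ᵥ* Em t = x := by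
      rw [hz, Matrix.vecMul_vecMul, hEEm, Matrix.vecMul_one]
    rw [hF]
    show z ⬝ᵥ (Em t * (φ t - P) * (Em t)ᵀ) *ᵥ z = x ⬝ᵥ (φ t - P) *ᵥ x
    rw [← Matrix.mulVec_mulVec, ← Matrix.mulVec_mulVec, Matrix.dotProduct_mulVec,
      Matrix.mulVec_transpose, hwt]
  rw [hF0, hFt] at hft
  rw [Matrix.sub_mulVec, dotProduct_sub] at hft
  linarith

end RiccatiAux

/-- Uniform bound for the time-invariant Riccati flow in terms of the fixed point `P` of
the algebraic Riccati equation: `φ_t(Q) ≤ P + e^{t(A−PS)}(Q−P)e^{t(A−PS)ᵀ}` and hence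
`‖φ_t(Q)‖₂ ≤ ‖P‖₂ + κ² ‖Q−P‖₂`. -/
theorem riccati_flow_uniform_bound (r : ℕ)
    (A S R1 : Matrix (Fin r) (Fin r) ℝ)
    (hS : S.PosSemidef) (hR1 : R1.PosDef)
    (P : Matrix (Fin r) (Fin r) ℝ) (hP : P.PosDef)
    (hare : A * P + P * Aᵀ - P * S * P + R1 = 0)
    (κ ν : ℝ) (hκ : 0 < κ) (hν : 0 < ν)
    (hdecay : ∀ t : ℝ, 0 ≤ t →
      specNorm (NormedSpace.exp (t • (A - P * S))) ≤ κ * Real.exp (-ν * t))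
    (Q : Matrix (Fin r) (Fin r) ℝ) (hQ : Q.PosDef)
    (φ : ℝ → Matrix (Fin r) (Fin r) ℝ)
    (hφ0 : φ 0 = Q)
    (hφ : ∀ t : ℝ, HasDerivAt φ (A * φ t + φ t * Aᵀ - φ t * S * φ t + R1) t) :
    ∀ t : ℝ, 0 ≤ t →
      (P + NormedSpace.exp (t • (A - P * S)) * (Q - P) *
          (NormedSpace.exp (t • (A - P * S)))ᵀ - φ t).PosSemidef ∧
      specNorm (φ t) ≤ specNorm P + κ ^ 2 * specNorm (Q - P) := by
  intro t ht
  have hSsym : Sᵀ = S := by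
    have h : Sᴴ = S := hS.1
    rwa [Matrix.conjTranspose_eq_transpose_of_trivial] at h
  have hPsym : Pᵀ = P := by
    have h : Pᴴ = P := hP.1
    rwa [Matrix.conjTranspose_eq_transpose_of_trivial] at h
  have hR1sym : R1ᵀ = R1 := by
    have h : R1ᴴ = R1 := hR1.1
    rwa [Matrix.conjTranspose_eq_transpose_of_trivial] at h
  have hQsym : Qᵀ = Q := by
    have h : Qᴴ = Q := hQ.1
    rwa [Matrix.conjTranspose_eq_transpose_of_trivial] at h
  have hSpsd : ∀ x : Fin r → ℝ, 0 ≤ x ⬝ᵥ S *ᵥ x := fun x => by simpa using hS.dotProduct_mulVec_nonneg x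
  have hsymφ : ∀ u : ℝ, 0 ≤ u → (φ u)ᵀ = φ u :=
    RiccatiAux.phi_symm A S R1 hSsym hR1sym φ (by rw [hφ0]; exact hQsym) hφ
  have hpsdφ := RiccatiAux.phi_psd A S R1 Q hR1 hQ φ hφ0 hφ hsymφ
  have hEmd : ∀ u : ℝ,
      HasDerivAt (fun v : ℝ => NormedSpace.exp (v • (-(A - P * S))))
        (-((A - P * S) * NormedSpace.exp (u • (-(A - P * S))))) u := by
    intro u
    have h := RiccatiAux.hasDerivAt_expMat (-(A - P * S)) u
    rw [neg_mul] at h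
    exact h
  have hcomm : ∀ u : ℝ, (A - P * S) * NormedSpace.exp (u • (-(A - P * S)))
      = NormedSpace.exp (u • (-(A - P * S))) * (A - P * S) := fun u =>
    RiccatiAux.commute_expMat (by noncomm_ring) u
  have hEEm : ∀ u : ℝ, NormedSpace.exp (u • (A - P * S)) *
      NormedSpace.exp (u • (-(A - P * S))) = 1 := fun u =>
    RiccatiAux.expMat_mul_expMat_neg (A - P * S) u
  have hEm0 : NormedSpace.exp ((0 : ℝ) • (-(A - P * S)))
      = (1 : Matrix (Fin r) (Fin r) ℝ) := by
    rw [zero_smul]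
    exact NormedSpace.exp_zero
  have hkey := RiccatiAux.key_ineq A S R1 P Q hSsym hSpsd hPsym hare φ hφ hφ0 hsymφ
    (fun v : ℝ => NormedSpace.exp (v • (A - P * S)))
    (fun v : ℝ => NormedSpace.exp (v • (-(A - P * S)))) hEmd hEm0 hcomm hEEm t ht
  set B : Matrix (Fin r) (Fin r) ℝ := NormedSpace.exp (t • (A - P * S)) with hB
  have tri : ∀ y : Fin r → ℝ,
      y ⬝ᵥ (B * (Q - P) * Bᵀ) *ᵥ y = (y ᵥ* B) ⬝ᵥ (Q - P) *ᵥ (y ᵥ* B) := by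
    intro y
    rw [← Matrix.mulVec_mulVec, ← Matrix.mulVec_mulVec, Matrix.dotProduct_mulVec,
      Matrix.mulVec_transpose]
  constructor
  · refine Matrix.PosSemidef.of_dotProduct_mulVec_nonneg ?_ ?_
    · show _ᴴ = _
      rw [Matrix.conjTranspose_eq_transpose_of_trivial]
      have hBQP : (B * (Q - P) * Bᵀ)ᵀ = B * (Q - P) * Bᵀ := by
        rw [transpose_mul, transpose_mul, transpose_transpose, transpose_sub, hQsym, hPsym]
        noncomm_ring
      rw [transpose_sub, transpose_add, hPsym, hsymφ t ht, hBQP]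
    · intro y
      have hgoal : 0 ≤ y ⬝ᵥ (P + B * (Q - P) * Bᵀ - φ t) *ᵥ y := by
        rw [Matrix.sub_mulVec, Matrix.add_mulVec, dotProduct_sub, dotProduct_add, tri y]
        linarith [hkey y]
      simpa using hgoal
  · have hBle : specNorm B ≤ κ := by
      have h1 := hdecay t ht
      rw [← hB] at h1
      have h2 : Real.exp (-ν * t) ≤ 1 := Real.exp_le_one_iff.mpr (by nlinarith)
      nlinarith [h1, h2, hκ.le]
    apply RiccatiAux.specNorm_le_of_quad (φ t) (hsymφ t ht) _
      (add_nonneg (RiccatiAux.specNorm_nonneg P)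
        (mul_nonneg (sq_nonneg κ) (RiccatiAux.specNorm_nonneg _))) (hpsdφ t ht)
    intro y
    have h := hkey y
    have h1 : y ⬝ᵥ P *ᵥ y ≤ specNorm P * (y ⬝ᵥ y) :=
      le_trans (le_abs_self _) (RiccatiAux.quad_abs_le P y)
    set w : Fin r → ℝ := y ᵥ* B with hw
    have h2 : w ⬝ᵥ (Q - P) *ᵥ w ≤ specNorm (Q - P) * (w ⬝ᵥ w) :=
      le_trans (le_abs_self _) (RiccatiAux.quad_abs_le (Q - P) w)
    have h3 : w ⬝ᵥ w ≤ specNorm Bᵀ ^ 2 * (y ⬝ᵥ y) := by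
      have h0 := RiccatiAux.mulVec_dot_self_le Bᵀ y
      rw [Matrix.mulVec_transpose] at h0
      rw [hw]
      exact h0
    rw [RiccatiAux.specNorm_transpose] at h3
    have h4 : specNorm B ^ 2 ≤ κ ^ 2 := by
      nlinarith [RiccatiAux.specNorm_nonneg B, hBle]
    have hyy := RiccatiAux.dotProduct_self_nonneg y
    have hww := RiccatiAux.dotProduct_self_nonneg w
    have hQPn := RiccatiAux.specNorm_nonneg (Q - P)
    nlinarith [h, h1, h2, h3, h4, mul_le_mul_of_nonneg_left h3 hQPn,
      mul_le_mul_of_nonneg_right h4 hyy, mul_nonneg hQPn hyy]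
end

section
/- For symmetric real (r×r) matrices A and B with eigenvalues λ_1(A) ≥ … ≥ λ_r(A) and λ_1(B) ≥ … ≥ λ_r(B), one has ∑_{i=1}^r (λ_i(A) − λ_i(B))² ≤ ‖A − B‖_F², where ‖·‖_F is the Frobenius norm (Hoffman–Wielandt inequality for symmetric matrices). -/
open Matrix

/-- The eigenvalues of a real symmetric matrix arranged in non-increasing order:
`sortedEigs hA 0 ≥ sortedEigs hA 1 ≥ …`. -/
noncomputable def sortedEigs {r : ℕ} {A : Matrix (Fin r) (Fin r) ℝ}
    (hA : A.IsHermitian) : Fin r → ℝ :=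
  fun i => (hA.eigenvalues ∘ Tuple.sort hA.eigenvalues) i.rev

/-- Core inequality: a doubly stochastic bilinear average of two antitone sequences is
bounded by the diagonal pairing, via Birkhoff and the rearrangement inequality. -/
lemma hw_ds_key {n : ℕ} {a b : Fin n → ℝ} (ha : Antitone a) (hb : Antitone b)
    {S : Matrix (Fin n) (Fin n) ℝ} (hS : S ∈ doublyStochastic ℝ (Fin n)) :
    ∑ i, ∑ j, S i j * (a i * b j) ≤ ∑ i, a i * b i := by
  obtain ⟨w, hw0, hw1, hwS⟩ := exists_eq_sum_perm_of_mem_doublyStochastic hS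
  have hmono : Monovary a b := by
    intro i j hij
    rcases le_or_gt i j with h | h
    · exact absurd (hb h) (not_le_of_gt hij)
    · exact ha h.le
  have hSij : ∀ i j, S i j = ∑ σ : Equiv.Perm (Fin n), w σ * (σ.permMatrix ℝ) i j := by
    intro i j
    rw [← hwS]
    simp [Matrix.sum_apply]
  have inner : ∀ i, ∑ j, S i j * (a i * b j)
      = ∑ σ : Equiv.Perm (Fin n), w σ * (a i * b (σ i)) := by
    intro i
    calc ∑ j, S i j * (a i * b j)
        = ∑ j, ∑ σ : Equiv.Perm (Fin n), w σ * ((σ.permMatrix ℝ) i j * (a i * b j)) := by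
          refine Finset.sum_congr rfl fun j _ => ?_
          rw [hSij, Finset.sum_mul]
          exact Finset.sum_congr rfl fun σ _ => by ring
      _ = ∑ σ : Equiv.Perm (Fin n), ∑ j, w σ * ((σ.permMatrix ℝ) i j * (a i * b j)) :=
          Finset.sum_comm
      _ = ∑ σ : Equiv.Perm (Fin n), w σ * (a i * b (σ i)) := by
          refine Finset.sum_congr rfl fun σ _ => ?_
          rw [← Finset.mul_sum]
          congr 1
          simp [Equiv.Perm.permMatrix, PEquiv.toMatrix_apply, Equiv.toPEquiv_apply,
            Option.mem_def, ite_mul, one_mul, zero_mul, Finset.sum_ite_eq]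
  calc ∑ i, ∑ j, S i j * (a i * b j)
      = ∑ σ : Equiv.Perm (Fin n), w σ * ∑ i, a i * b (σ i) := by
        rw [Finset.sum_congr rfl fun i _ => inner i, Finset.sum_comm]
        exact Finset.sum_congr rfl fun σ _ => (Finset.mul_sum _ _ _).symm
    _ ≤ ∑ σ : Equiv.Perm (Fin n), w σ * ∑ i, a i * b i := by
        refine Finset.sum_le_sum fun σ _ => ?_
        refine mul_le_mul_of_nonneg_left ?_ (hw0 σ)
        have := hmono.sum_smul_comp_perm_le_sum_smul (σ := σ)
        simpa [smul_eq_mul] using this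
    _ = ∑ i, a i * b i := by rw [← Finset.sum_mul, hw1, one_mul]

/-- Trace of a product of two symmetric matrices in terms of eigenvalues. -/
lemma hw_trace_mul {r : ℕ} {A B : Matrix (Fin r) (Fin r) ℝ}
    (hA : A.IsHermitian) (hB : B.IsHermitian) :
    Matrix.trace (A * B) = ∑ i, ∑ j, hA.eigenvalues i * hB.eigenvalues j *
      ((star (hA.eigenvectorUnitary : Matrix (Fin r) (Fin r) ℝ) *
        (hB.eigenvectorUnitary : Matrix (Fin r) (Fin r) ℝ)) i j) ^ 2 := by
  set U : Matrix (Fin r) (Fin r) ℝ := (hA.eigenvectorUnitary : Matrix (Fin r) (Fin r) ℝ)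
  set V : Matrix (Fin r) (Fin r) ℝ := (hB.eigenvectorUnitary : Matrix (Fin r) (Fin r) ℝ)
  set W : Matrix (Fin r) (Fin r) ℝ := star U * V with hW
  have hdiagA : diagonal ((RCLike.ofReal : ℝ → ℝ) ∘ hA.eigenvalues) = diagonal hA.eigenvalues := by
    rw [RCLike.ofReal_real_eq_id]; rfl
  have hdiagB : diagonal ((RCLike.ofReal : ℝ → ℝ) ∘ hB.eigenvalues) = diagonal hB.eigenvalues := by
    rw [RCLike.ofReal_real_eq_id]; rfl
  have hAe : A = U * diagonal hA.eigenvalues * star U := by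
    rw [← hdiagA]; exact hA.spectral_theorem
  have hBe : B = V * diagonal hB.eigenvalues * star V := by
    rw [← hdiagB]; exact hB.spectral_theorem
  have key : trace (A * B) = trace (diagonal hA.eigenvalues * W * diagonal hB.eigenvalues
      * star W) := by
    conv_lhs => rw [hAe, hBe]
    rw [hW, Matrix.star_mul, star_star]
    rw [show U * diagonal hA.eigenvalues * star U * (V * diagonal hB.eigenvalues * star V)
        = U * (diagonal hA.eigenvalues * (star U * V) * diagonal hB.eigenvalues * (star V)) by
      noncomm_ring]
    rw [Matrix.trace_mul_comm]
    congr 1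
    noncomm_ring
  rw [key]
  rw [Matrix.trace]
  refine Finset.sum_congr rfl fun i _ => ?_
  rw [Matrix.diag_apply, Matrix.mul_apply]
  refine Finset.sum_congr rfl fun j _ => ?_
  rw [Matrix.mul_diagonal, Matrix.diagonal_mul, Matrix.star_apply, star_trivial]
  ring

/-- Hoffman–Wielandt inequality for real symmetric matrices: if `λ_1(A) ≥ … ≥ λ_r(A)` and
`λ_1(B) ≥ … ≥ λ_r(B)` are the ordered eigenvalues, then
`∑ i (λ_i(A) − λ_i(B))² ≤ ‖A − B‖_F² = tr((A−B)ᵀ(A−B))`. -/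
theorem hoffman_wielandt_symmetric (r : ℕ) (A B : Matrix (Fin r) (Fin r) ℝ)
    (hA : A.IsHermitian) (hB : B.IsHermitian) :
    ∑ i : Fin r, (sortedEigs hA i - sortedEigs hB i) ^ 2 ≤
      Matrix.trace ((A - B)ᵀ * (A - B)) := by
  classical
  set α := hA.eigenvalues with hα
  set β := hB.eigenvalues with hβ
  set U : Matrix (Fin r) (Fin r) ℝ := (hA.eigenvectorUnitary : Matrix (Fin r) (Fin r) ℝ)
  set V : Matrix (Fin r) (Fin r) ℝ := (hB.eigenvectorUnitary : Matrix (Fin r) (Fin r) ℝ)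
  set W : Matrix (Fin r) (Fin r) ℝ := star U * V with hWdef
  have hWu : W ∈ Matrix.unitaryGroup (Fin r) ℝ :=
    mul_mem (Unitary.star_mem (hA.eigenvectorUnitary).2) (hB.eigenvectorUnitary).2
  have hW1 : W * star W = 1 := (Matrix.mem_unitaryGroup_iff).mp hWu
  have hW1' : star W * W = 1 := (Matrix.mem_unitaryGroup_iff').mp hWu
  set S : Matrix (Fin r) (Fin r) ℝ := fun i j => (W i j) ^ 2 with hSdef
  -- S is doubly stochastic
  have hSrow : ∀ i, ∑ j, S i j = 1 := by
    intro i
    have h : (W * star W) i i = (1 : Matrix (Fin r) (Fin r) ℝ) i i := by rw [hW1]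
    simp only [Matrix.mul_apply, Matrix.star_apply, star_trivial, Matrix.one_apply_eq] at h
    rw [← h]
    exact Finset.sum_congr rfl fun j _ => by ring
  have hScol : ∀ j, ∑ i, S i j = 1 := by
    intro j
    have h : (star W * W) j j = (1 : Matrix (Fin r) (Fin r) ℝ) j j := by rw [hW1']
    simp only [Matrix.mul_apply, Matrix.star_apply, star_trivial, Matrix.one_apply_eq] at h
    rw [← h]
    exact Finset.sum_congr rfl fun i _ => by ring
  -- trace formulas
  have traceAB : Matrix.trace (A * B) = ∑ i, ∑ j, α i * β j * S i j := hw_trace_mul hA hB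
  have traceAA : Matrix.trace (A * A) = ∑ i, α i ^ 2 := by
    have h := hw_trace_mul hA hA
    have hUU : star U * U = 1 :=
      (Matrix.mem_unitaryGroup_iff').mp (hA.eigenvectorUnitary).2
    rw [hUU] at h
    rw [h]
    refine Finset.sum_congr rfl fun i _ => ?_
    simp [Matrix.one_apply, apply_ite (· ^ 2), mul_ite, Finset.sum_ite_eq, sq, hα]
  have traceBB : Matrix.trace (B * B) = ∑ i, β i ^ 2 := by
    have h := hw_trace_mul hB hB
    have hVV : star V * V = 1 :=
      (Matrix.mem_unitaryGroup_iff').mp (hB.eigenvectorUnitary).2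
    rw [hVV] at h
    rw [h]
    refine Finset.sum_congr rfl fun i _ => ?_
    simp [Matrix.one_apply, apply_ite (· ^ 2), mul_ite, Finset.sum_ite_eq, sq, hβ]
  -- sorting permutations
  set σA : Equiv.Perm (Fin r) := Fin.revPerm.trans (Tuple.sort α) with hσA
  set σB : Equiv.Perm (Fin r) := Fin.revPerm.trans (Tuple.sort β) with hσB
  have ha_def : sortedEigs hA = α ∘ σA := rfl
  have hb_def : sortedEigs hB = β ∘ σB := rfl
  have ha : Antitone (sortedEigs hA) := fun i j hij =>
    Tuple.monotone_sort α (Fin.rev_le_rev.mpr hij)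
  have hb : Antitone (sortedEigs hB) := fun i j hij =>
    Tuple.monotone_sort β (Fin.rev_le_rev.mpr hij)
  -- reindexed doubly stochastic matrix
  set S' : Matrix (Fin r) (Fin r) ℝ := S.submatrix σA σB with hS'
  have hS'mem : S' ∈ doublyStochastic ℝ (Fin r) := by
    rw [mem_doublyStochastic_iff_sum]
    refine ⟨fun i j => sq_nonneg _, fun i => ?_, fun j => ?_⟩
    · rw [show ∑ j, S' i j = ∑ j, S (σA i) (σB j) from rfl,
        Equiv.sum_comp σB (fun j => S (σA i) j)]
      exact hSrow _
    · rw [show ∑ i, S' i j = ∑ i, S (σA i) (σB j) from rfl,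
        Equiv.sum_comp σA (fun i => S i (σB j))]
      exact hScol _
  -- reindex the cross term
  have hT : ∑ i, ∑ j, α i * β j * S i j
      = ∑ i, ∑ j, S' i j * (sortedEigs hA i * sortedEigs hB j) := by
    rw [← Equiv.sum_comp σA (fun i => ∑ j, α i * β j * S i j)]
    refine Finset.sum_congr rfl fun i _ => ?_
    rw [← Equiv.sum_comp σB (fun j => α (σA i) * β j * S (σA i) j)]
    refine Finset.sum_congr rfl fun j _ => ?_
    rw [ha_def, hb_def]
    simp only [hS', Matrix.submatrix_apply, Function.comp_apply]
    ring
  have hkey : ∑ i, ∑ j, S' i j * (sortedEigs hA i * sortedEigs hB j)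
      ≤ ∑ i, sortedEigs hA i * sortedEigs hB i := hw_ds_key ha hb hS'mem
  -- eigenvalue sums are permutation-invariant
  have sumA : ∑ i, (sortedEigs hA i) ^ 2 = ∑ i, α i ^ 2 := by
    rw [ha_def]
    exact Equiv.sum_comp σA (fun i => α i ^ 2)
  have sumB : ∑ i, (sortedEigs hB i) ^ 2 = ∑ i, β i ^ 2 := by
    rw [hb_def]
    exact Equiv.sum_comp σB (fun i => β i ^ 2)
  -- transpose is itself
  have hherm : (A - B)ᵀ = A - B := by
    have h : (A - B)ᴴ = A - B := hA.sub hB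
    rwa [← Matrix.conjTranspose_eq_transpose_of_trivial]
  rw [hherm]
  have hexp : (A - B) * (A - B) = A * A - A * B - B * A + B * B := by noncomm_ring
  rw [hexp, Matrix.trace_add, Matrix.trace_sub, Matrix.trace_sub,
    Matrix.trace_mul_comm B A, traceAA, traceAB, traceBB]
  have hLHS : ∑ i, (sortedEigs hA i - sortedEigs hB i) ^ 2
      = ∑ i, (sortedEigs hA i) ^ 2 + ∑ i, (sortedEigs hB i) ^ 2
        - 2 * ∑ i, sortedEigs hA i * sortedEigs hB i := by
    have h : ∀ i, (sortedEigs hA i - sortedEigs hB i) ^ 2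
        = sortedEigs hA i ^ 2 + sortedEigs hB i ^ 2
          - 2 * (sortedEigs hA i * sortedEigs hB i) := fun i => by ring
    rw [Finset.sum_congr rfl fun i _ => h i, Finset.sum_sub_distrib,
      Finset.sum_add_distrib, ← Finset.mul_sum]
  rw [hLHS, sumA, sumB]
  have := hT ▸ hkey
  linarith
end
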